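/- arXiv:0905.0830 — 4 statements merged into one kernel-verified Lean document; each statement's English description precedes it below -/
import Mathlib

section
/- If α is a badly approximable real number (i.e. inf_{q≥1} q·‖qα‖ > 0, where ‖·‖ is the distance to the nearest integer), then there exists a constant C(α) > 0 such that for every integer q ≥ 2, the sum over integers x with q ≤ x ≤ q³ of 1/(‖αx‖ · x · (log₂ x)²) is at most C(α). -/
noncomputable def nint (y : ℝ) : ℝ := |y - round y|

lemma nint_nonneg (y : ℝ) : 0 ≤ nint y := abs_nonneg _

lemma nint_le_half (y : ℝ) : nint y ≤ 1/2 := abs_sub_round y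

lemma nint_le_int (y : ℝ) (k : ℤ) : nint y ≤ |y - k| := round_le y k

-- separation of fractional parts
lemma fract_sep {α δ : ℝ} (hδ : ∀ q : ℕ, 1 ≤ q → δ ≤ (q : ℝ) * nint (q * α))
    {m n : ℕ} (h : m < n) :
    δ / ((n : ℝ) - m) ≤ |Int.fract (α * n) - Int.fract (α * m)| := by
  set d : ℕ := n - m with hd
  have hd1 : 1 ≤ d := by omega
  have hdc : (d : ℝ) = (n : ℝ) - m := by
    push_cast [hd]; rw [Nat.cast_sub h.le]
  have hdpos : (0:ℝ) < d := by exact_mod_cast hd1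
  have h1 : δ ≤ (d : ℝ) * nint (d * α) := hδ d hd1
  have key : nint ((d : ℝ) * α) ≤ |Int.fract (α * n) - Int.fract (α * m)| := by
    have h2 := nint_le_int ((d : ℝ) * α) (⌊α * (n:ℝ)⌋ - ⌊α * (m:ℝ)⌋)
    refine h2.trans_eq ?_
    congr 1
    rw [Int.fract, Int.fract]
    push_cast [hdc]
    ring
  calc δ / ((n:ℝ) - m) = δ / d := by rw [hdc]
    _ ≤ ((d:ℝ) * nint (d*α)) / d := by
        exact div_le_div_of_nonneg_right h1 hdpos.le
    _ = nint (d * α) := by field_simp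
    _ ≤ _ := key

open Finset in
lemma block_sum {α δ : ℝ} (hδpos : 0 < δ)
    (hδ : ∀ q : ℕ, 1 ≤ q → δ ≤ (q : ℝ) * nint (q * α))
    (hδhalf : δ ≤ 1/2)
    (k : ℕ) (T : Finset ℕ) (hT : T ⊆ Finset.Icc (2^k) (2^(k+1)-1)) :
    ∑ x ∈ T, 1 / nint (α * x) ≤ 2^(k+2)/δ * (1 + Real.log (2^k/δ)) := by
  classical
  set ε : ℝ := δ / 2^(k+1) with hε
  have hεpos : 0 < ε := by positivity
  set J : ℕ := ⌊(2:ℝ)^k/δ⌋₊ with hJ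
  have hJ1 : 1 ≤ J := by
    apply Nat.le_floor
    rw [Nat.cast_one, le_div_iff₀ hδpos, one_mul]
    calc δ ≤ 1/2 := hδhalf
      _ ≤ 2^k := by
        have : (1:ℝ) ≤ 2^k := one_le_pow₀ (by norm_num)
        linarith
  -- basic facts for x ∈ T
  have hx1 : ∀ x ∈ T, 1 ≤ x := by
    intro x hx
    have := Finset.mem_Icc.mp (hT hx)
    have : 2^k ≤ x := this.1
    have h2 : 1 ≤ 2^k := Nat.one_le_two_pow
    omega
  have hnlb : ∀ x ∈ T, δ / x ≤ nint (α * x) := by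
    intro x hx
    have h1 := hδ x (hx1 x hx)
    rw [mul_comm (x:ℝ) α] at h1
    have hxpos : (0:ℝ) < x := by exact_mod_cast hx1 x hx
    rw [div_le_iff₀ hxpos, mul_comm]
    exact h1
  have hnpos : ∀ x ∈ T, 0 < nint (α * x) := by
    intro x hx
    have hxpos : (0:ℝ) < x := by exact_mod_cast hx1 x hx
    exact lt_of_lt_of_le (by positivity) (hnlb x hx)
  have hεlt : ∀ x ∈ T, ε < nint (α * x) := by
    intro x hx
    have hxle : (x:ℝ) < 2^(k+1) := by
      have := (Finset.mem_Icc.mp (hT hx)).2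
      have h2 : x < 2^(k+1) := by
        have : 1 ≤ 2^(k+1) := Nat.one_le_two_pow
        omega
      exact_mod_cast lt_of_lt_of_le (by exact_mod_cast h2) (le_refl _)
    have hxpos : (0:ℝ) < x := by exact_mod_cast hx1 x hx
    calc ε = δ / 2^(k+1) := rfl
      _ < δ / x := by apply div_lt_div_of_pos_left hδpos hxpos hxle
      _ ≤ nint (α * x) := hnlb x hx
  set j : ℕ → ℕ := fun x => ⌊nint (α * x) / ε⌋₊ with hj
  have hj1 : ∀ x ∈ T, 1 ≤ j x := by
    intro x hx
    apply Nat.le_floor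
    rw [Nat.cast_one, le_div_iff₀ hεpos, one_mul]
    exact (hεlt x hx).le
  have hjle : ∀ x ∈ T, j x ≤ J := by
    intro x hx
    apply Nat.floor_le_floor
    rw [div_le_div_iff₀ hεpos hδpos]
    calc nint (α * x) * δ ≤ (1/2) * δ := by
          apply mul_le_mul_of_nonneg_right (nint_le_half _) hδpos.le
      _ ≤ 2^k * ε := by
          apply le_of_eq
          rw [hε, pow_succ]
          field_simp
  have hterm : ∀ x ∈ T, 1 / nint (α * x) ≤ 1 / (ε * j x) := by
    intro x hx
    apply one_div_le_one_div_of_le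
    · have := hj1 x hx
      have hjpos : (0:ℝ) < j x := by exact_mod_cast this
      exact mul_pos hεpos hjpos
    · rw [mul_comm, ← le_div_iff₀ hεpos]
      exact Nat.floor_le (div_nonneg (nint_nonneg _) hεpos.le)
    -- separation
  have hsep : ∀ x ∈ T, ∀ y ∈ T, x < y →
      ε < |Int.fract (α * y) - Int.fract (α * x)| := by
    intro x hx y hy hxy
    have h1 := fract_sep hδ hxy
    have hb1 := Finset.mem_Icc.mp (hT hx)
    have hb2 := Finset.mem_Icc.mp (hT hy)
    have hd : (0:ℝ) < (y:ℝ) - x := by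
      have : (x:ℝ) < y := by exact_mod_cast hxy
      linarith
    have hd2 : (y:ℝ) - x < 2^(k+1) := by
      have h2 : y - x < 2^(k+1) := by
        have : 1 ≤ 2^(k+1) := Nat.one_le_two_pow
        omega
      have h3 : ((y - x : ℕ):ℝ) = (y:ℝ) - x := by
        rw [Nat.cast_sub hxy.le]
      rw [← h3]
      exact_mod_cast h2
    calc ε = δ / 2^(k+1) := rfl
      _ < δ / ((y:ℝ) - x) := div_lt_div_of_pos_left hδpos hd hd2
      _ ≤ _ := h1
  -- same bucket means close
  have hbucket : ∀ x ∈ T, ∀ y ∈ T, j x = j y →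
      |nint (α * x) - nint (α * y)| < ε := by
    intro x hx y hy hjeq
    have h1 : (j x : ℝ) ≤ nint (α * x) / ε := Nat.floor_le (div_nonneg (nint_nonneg _) hεpos.le)
    have h2 : nint (α * x) / ε < j x + 1 := Nat.lt_floor_add_one _
    have h3 : (j y : ℝ) ≤ nint (α * y) / ε := Nat.floor_le (div_nonneg (nint_nonneg _) hεpos.le)
    have h4 : nint (α * y) / ε < j y + 1 := Nat.lt_floor_add_one _
    rw [hjeq] at h1 h2
    rw [abs_sub_lt_iff]
    rw [div_lt_iff₀ hεpos] at h2 h4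
    rw [le_div_iff₀ hεpos] at h1 h3
    constructor <;> nlinarith [hεpos]
  -- nint vs fract
  have hmin : ∀ y : ℝ, nint y = min (Int.fract y) (1 - Int.fract y) := fun y =>
    abs_sub_round_eq_min y
  set φ : ℕ → ℕ × ℕ := fun x => ((if Int.fract (α * x) ≤ 1/2 then 0 else 1), j x) with hφ
  have key : ∀ x ∈ T, ∀ y ∈ T, x < y → φ x = φ y → False := by
    intro x hx y hy hxy heq
    have hs := hsep x hx y hy hxy
    have hb := hbucket x hx y hy (congrArg Prod.snd heq)
    have hside := congrArg Prod.fst heq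
    simp only [hφ] at hside
    by_cases hc : Int.fract (α * x) ≤ 1/2
    · by_cases hc2 : Int.fract (α * y) ≤ 1/2
      · have e1 : nint (α * x) = Int.fract (α * x) := by
          rw [hmin]; exact min_eq_left (by linarith)
        have e2 : nint (α * y) = Int.fract (α * y) := by
          rw [hmin]; exact min_eq_left (by linarith)
        rw [e1, e2, abs_sub_comm] at hb
        linarith
      · rw [if_pos hc, if_neg hc2] at hside; simp at hside
    · by_cases hc2 : Int.fract (α * y) ≤ 1/2
      · rw [if_neg hc, if_pos hc2] at hside; simp at hside
      · push_neg at hc hc2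
        have e1 : nint (α * x) = 1 - Int.fract (α * x) := by
          rw [hmin]; exact min_eq_right (by linarith)
        have e2 : nint (α * y) = 1 - Int.fract (α * y) := by
          rw [hmin]; exact min_eq_right (by linarith)
        rw [e1, e2] at hb
        rw [abs_sub_lt_iff] at hb
        rw [lt_abs] at hs
        rcases hs with h | h <;> linarith [hb.1, hb.2]
  have hinj : ∀ x ∈ T, ∀ y ∈ T, φ x = φ y → x = y := by
    intro x hx y hy heq
    by_contra hne
    rcases lt_or_gt_of_ne hne with hxy | hxy
    · exact key x hx y hy hxy heq
    · exact key y hy x hx hxy heq.symm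
  have hharm : ∀ n : ℕ, ∑ jv ∈ Finset.Icc 1 n, ((jv:ℝ))⁻¹ = (harmonic n : ℝ) := by
    intro n
    induction n with
    | zero => simp [harmonic]
    | succ n ih =>
      rw [← Finset.Ico_add_one_right_eq_Icc, Finset.sum_Ico_succ_top (by omega), Finset.Ico_add_one_right_eq_Icc, ih,
        harmonic_succ]
      push_cast
      ring
  have hlogJ : Real.log J ≤ Real.log (2^k/δ) := by
    apply Real.log_le_log (by exact_mod_cast hJ1)
    exact Nat.floor_le (by positivity)
  have hHbound : ∑ jv ∈ Finset.Icc 1 J, ((jv:ℝ))⁻¹ ≤ 1 + Real.log (2^k/δ) := by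
    rw [hharm]
    exact (harmonic_le_one_add_log J).trans (by linarith)
  have h5 : ∑ x ∈ T, ((j x:ℝ))⁻¹ = ∑ p ∈ T.image φ, ((p.2:ℝ))⁻¹ := by
    rw [Finset.sum_image hinj]
  have hsub : T.image φ ⊆ Finset.Icc 0 1 ×ˢ Finset.Icc 1 J := by
    intro p hp
    simp only [Finset.mem_image] at hp
    obtain ⟨x, hx, rfl⟩ := hp
    rw [Finset.mem_product]
    refine ⟨Finset.mem_Icc.mpr ⟨Nat.zero_le _, ?_⟩, Finset.mem_Icc.mpr ⟨hj1 x hx, hjle x hx⟩⟩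
    simp only [hφ]
    split <;> omega
  have h6 : ∑ p ∈ T.image φ, ((p.2:ℝ))⁻¹ ≤
      ∑ p ∈ Finset.Icc 0 1 ×ˢ Finset.Icc 1 J, ((p.2:ℝ))⁻¹ :=
    Finset.sum_le_sum_of_subset_of_nonneg hsub (fun p _ _ => by positivity)
  have h7 : ∑ p ∈ Finset.Icc 0 1 ×ˢ Finset.Icc 1 J, ((p.2:ℝ))⁻¹ =
      2 * ∑ jv ∈ Finset.Icc 1 J, ((jv:ℝ))⁻¹ := by
    rw [Finset.sum_product]
    simp only []
    rw [Finset.sum_const]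
    simp [Nat.card_Icc]
  have hsum : ∑ x ∈ T, ((j x:ℝ))⁻¹ ≤ 2 * (1 + Real.log (2^k/δ)) := by
    rw [h5]
    refine h6.trans ?_
    rw [h7]
    have h8 : (0:ℝ) ≤ 2 := by norm_num
    nlinarith [hHbound, Real.log_nonneg (show (1:ℝ) ≤ J by exact_mod_cast hJ1),
      hlogJ]
  calc ∑ x ∈ T, 1 / nint (α * x) ≤ ∑ x ∈ T, 1 / (ε * j x) := Finset.sum_le_sum hterm
    _ = ε⁻¹ * ∑ x ∈ T, ((j x : ℝ))⁻¹ := by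
        rw [Finset.mul_sum]
        apply Finset.sum_congr rfl
        intro x hx
        rw [one_div, mul_inv]
    _ ≤ ε⁻¹ * (2 * (1 + Real.log (2^k/δ))) := by
        apply mul_le_mul_of_nonneg_left hsum (by positivity)
    _ = 2^(k+2)/δ * (1 + Real.log (2^k/δ)) := by
        rw [hε]
        rw [show (2:ℝ)^(k+2) = 2^(k+1) * 2 by ring]
        field_simp

theorem stmt_0 (α : ℝ) (hα : ∃ δ > 0, ∀ q : ℕ, 1 ≤ q → δ ≤ (q : ℝ) * nint (q * α)) :
    ∃ C > 0, ∀ q : ℕ, 2 ≤ q →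
      ∑ x ∈ Finset.Icc q (q ^ 3),
        1 / (nint (α * x) * x * (Real.logb 2 x) ^ 2) ≤ C := by
  obtain ⟨δ, hδpos, hδ⟩ := hα
  have hδhalf : δ ≤ 1 / 2 := by
    have h1 := hδ 1 le_rfl
    have h2 := nint_le_half ((1:ℕ) * α)
    push_cast at h1
    linarith [h1, h2]
  have hlogδ : Real.log δ ≤ 0 := Real.log_nonpos hδpos.le (by linarith)
  have hlog2 : (0:ℝ) < Real.log 2 := Real.log_pos (by norm_num)
  set A : ℝ := 1 + Real.log 2 - Real.log δ with hA
  have hApos : 0 < A := by rw [hA]; linarith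
  refine ⟨144 * A / δ, by positivity, ?_⟩
  intro q hq
  set L : ℝ := Real.logb 2 q with hL
  have hq1 : (1:ℝ) ≤ q := by
    have h1 : 1 ≤ q := by omega
    exact_mod_cast h1
  have hq2 : (2:ℝ) ≤ q := by exact_mod_cast hq
  have hL1 : 1 ≤ L := by
    rw [hL, ← Real.logb_self_eq_one (b := 2) (by norm_num)]
    exact Real.logb_le_logb_of_le (by norm_num) (by norm_num) hq2
  have hLpos : 0 < L := lt_of_lt_of_le one_pos hL1
  set l : ℕ := Nat.log 2 q with hl
  set K : ℕ := 3 * l + 2 with hK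
  -- the blocks
  set B : ℕ → Finset ℕ := fun k => Finset.Icc q (q ^ 3) ∩ Finset.Icc (2^k) (2^(k+1)-1)
    with hB
  have hcover : Finset.Icc q (q^3) ⊆ (Finset.range (K+1)).biUnion B := by
    intro x hx
    have hx' := Finset.mem_Icc.mp hx
    have hx1 : 1 ≤ x := by omega
    rw [Finset.mem_biUnion]
    refine ⟨Nat.log 2 x, ?_, ?_⟩
    · rw [Finset.mem_range]
      have e1 : q < 2^(l+1) := Nat.lt_pow_succ_log_self (by norm_num) q
      have e2 : x ≤ q^3 := hx'.2
      have e3 : x < 2^(3*l+3) := by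
        calc x ≤ q^3 := e2
          _ < (2^(l+1))^3 := by
              apply Nat.pow_lt_pow_left e1 (by norm_num)
          _ = 2^(3*l+3) := by rw [← pow_mul]; ring_nf
      have := Nat.log_lt_of_lt_pow (by omega) e3
      omega
    · rw [hB, Finset.mem_inter]
      refine ⟨hx, Finset.mem_Icc.mpr ⟨Nat.pow_log_le_self 2 (by omega), ?_⟩⟩
      have := Nat.lt_pow_succ_log_self (by norm_num : 1 < 2) x
      omega
  have hdisj : ∀ k1 ∈ Finset.range (K+1), ∀ k2 ∈ Finset.range (K+1), k1 ≠ k2 →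
      Disjoint (B k1) (B k2) := by
    intro k1 _ k2 _ hne
    rw [Finset.disjoint_left]
    intro x hx1 hx2
    rw [hB, Finset.mem_inter, Finset.mem_Icc, Finset.mem_Icc] at hx1 hx2
    rcases Nat.lt_or_ge k1 k2 with h | h
    · have : 2^(k1+1) ≤ 2^k2 := Nat.pow_le_pow_right (by norm_num) (by omega)
      have h1 : 1 ≤ 2^(k1+1) := Nat.one_le_two_pow
      omega
    · have hlt : k2 < k1 := by omega
      have : 2^(k2+1) ≤ 2^k1 := Nat.pow_le_pow_right (by norm_num) (by omega)
      have h1 : 1 ≤ 2^(k2+1) := Nat.one_le_two_pow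
      omega
  -- nonnegativity of terms
  have hnn : ∀ x : ℕ, 0 ≤ 1 / (nint (α * x) * x * (Real.logb 2 x) ^ 2) := by
    intro x
    apply one_div_nonneg.mpr
    apply mul_nonneg (mul_nonneg (nint_nonneg _) (Nat.cast_nonneg _)) (sq_nonneg _)
  -- per-block bound
  have hblock : ∀ k ∈ Finset.range (K+1),
      ∑ x ∈ B k, 1 / (nint (α * x) * x * (Real.logb 2 x) ^ 2) ≤
        4 / (δ * L^2) * ((K:ℝ)+1) * A := by
    intro k hk
    rw [Finset.mem_range] at hk
    have hTsub : B k ⊆ Finset.Icc (2^k) (2^(k+1)-1) := by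
      rw [hB]; exact Finset.inter_subset_right
    -- pointwise bound
    have hpw : ∀ x ∈ B k, 1 / (nint (α * x) * x * (Real.logb 2 x) ^ 2) ≤
        1 / ((2:ℝ)^k * L^2) * (1 / nint (α * x)) := by
      intro x hx
      rw [hB, Finset.mem_inter] at hx
      have hxq := Finset.mem_Icc.mp hx.1
      have hxb := Finset.mem_Icc.mp hx.2
      have hx1 : 1 ≤ x := by omega
      have hxpos : (0:ℝ) < x := by exact_mod_cast hx1
      have hnpos : 0 < nint (α * x) := by
        have h1 := hδ x hx1
        rw [mul_comm (x:ℝ) α] at h1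
        nlinarith [hδpos, hxpos]
      have hxq' : (q:ℝ) ≤ x := by exact_mod_cast hxq.1
      have hgL : L ≤ Real.logb 2 x := by
        rw [hL]
        exact Real.logb_le_logb_of_le (by norm_num) (by linarith) hxq'
      have h2k : (2:ℝ)^k ≤ x := by
        have : (2:ℕ)^k ≤ x := hxb.1
        exact_mod_cast this
      have hb : (2:ℝ)^k * L^2 ≤ (x:ℝ) * (Real.logb 2 x)^2 := by
        apply mul_le_mul h2k ?_ (by positivity) (by positivity)
        apply pow_le_pow_left₀ hLpos.le hgL
      rw [one_div, one_div, one_div, ← mul_inv]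
      apply inv_anti₀
      · positivity
      · rw [mul_comm ((2:ℝ)^k * L^2) (nint (α * x)), mul_assoc]
        exact mul_le_mul_of_nonneg_left hb hnpos.le
    calc ∑ x ∈ B k, 1 / (nint (α * x) * x * (Real.logb 2 x) ^ 2)
        ≤ ∑ x ∈ B k, 1 / ((2:ℝ)^k * L^2) * (1 / nint (α * x)) := Finset.sum_le_sum hpw
      _ = 1 / ((2:ℝ)^k * L^2) * ∑ x ∈ B k, 1 / nint (α * x) := by
          rw [Finset.mul_sum]
      _ ≤ 1 / ((2:ℝ)^k * L^2) * (2^(k+2)/δ * (1 + Real.log (2^k/δ))) := by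
          apply mul_le_mul_of_nonneg_left (block_sum hδpos hδ hδhalf k (B k) hTsub)
          positivity
      _ = 4 / (δ * L^2) * (1 + Real.log (2^k/δ)) := by
          rw [show (2:ℝ)^(k+2) = 2^k * 4 by ring]
          field_simp
      _ ≤ 4 / (δ * L^2) * (((K:ℝ)+1) * A) := by
          apply mul_le_mul_of_nonneg_left ?_ (by positivity)
          rw [Real.log_div (by positivity) (by positivity), Real.log_pow]
          have hkK' : k ≤ K := by omega
          have hkK : (k:ℝ) ≤ K := by exact_mod_cast hkK'
          have hk0 : (0:ℝ) ≤ k := Nat.cast_nonneg k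
          rw [hA]
          nlinarith [hlog2, hlogδ, hkK, hk0]
      _ = 4 / (δ * L^2) * ((K:ℝ)+1) * A := by ring
  -- assemble
  have hKL : (K:ℝ) + 1 ≤ 6 * L := by
    have hlL : (l:ℝ) ≤ L := by
      have h1 : (2:ℕ)^l ≤ q := Nat.pow_log_le_self 2 (by omega)
      have h2 : ((2:ℝ))^l ≤ q := by exact_mod_cast h1
      have h3 : Real.logb 2 ((2:ℝ)^l) ≤ L := by
        rw [hL]
        exact Real.logb_le_logb_of_le (by norm_num) (by positivity) h2
      rwa [Real.logb_pow, Real.logb_self_eq_one (by norm_num), mul_one] at h3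
    have : (K:ℝ) = 3 * l + 2 := by rw [hK]; push_cast; ring
    rw [this]
    linarith
  calc ∑ x ∈ Finset.Icc q (q ^ 3), 1 / (nint (α * x) * x * (Real.logb 2 x) ^ 2)
      ≤ ∑ x ∈ (Finset.range (K+1)).biUnion B,
          1 / (nint (α * x) * x * (Real.logb 2 x) ^ 2) :=
        Finset.sum_le_sum_of_subset_of_nonneg hcover (fun x _ _ => hnn x)
    _ = ∑ k ∈ Finset.range (K+1), ∑ x ∈ B k,
          1 / (nint (α * x) * x * (Real.logb 2 x) ^ 2) :=
        Finset.sum_biUnion hdisj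
    _ ≤ ∑ k ∈ Finset.range (K+1), 4 / (δ * L^2) * ((K:ℝ)+1) * A :=
        Finset.sum_le_sum hblock
    _ = ((K:ℝ)+1) * (4 / (δ * L^2) * ((K:ℝ)+1) * A) := by
        rw [Finset.sum_const, Finset.card_range]
        push_cast
        ring
    _ ≤ 144 * A / δ := by
        have h36 : ((K:ℝ)+1) * ((K:ℝ)+1) ≤ 36 * L^2 := by nlinarith [hKL, hLpos]
        have hpos4 : (0:ℝ) ≤ 4 * A / (δ * L^2) := by positivity
        calc ((K:ℝ)+1) * (4 / (δ * L^2) * ((K:ℝ)+1) * A)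
            = (((K:ℝ)+1) * ((K:ℝ)+1)) * (4 * A / (δ * L^2)) := by ring
          _ ≤ (36 * L^2) * (4 * A / (δ * L^2)) := mul_le_mul_of_nonneg_right h36 hpos4
          _ = 144 * A / δ := by field_simp; ring
end

section
/- Let α be badly approximable and let 0 < a < 1. Then there exists C(α,a) > 0 such that for every integer q ≥ 2, the sum over integers x with q ≤ x ≤ q³ of 1/(‖αx‖ · x · (log(1/‖αx‖))^a · (log x)^{2−a}) is at most C(α,a). -/
lemma nint_le_abs_sub_int (y : ℝ) (n : ℤ) : nint y ≤ |y - n| := by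
  rcases eq_or_ne n (round y) with rfl | hne
  · exact le_rfl
  · have h1 : (1:ℝ) ≤ |(round y : ℝ) - n| := by
      have : round y - n ≠ 0 := sub_ne_zero.mpr (by exact_mod_cast (Ne.symm hne))
      have := Int.one_le_abs this
      exact_mod_cast this
    have h2 : |y - n| ≥ |(round y : ℝ) - n| - |y - round y| := by
      have := abs_sub_abs_le_abs_sub ((round y : ℝ) - n) (y - n)
      have h3 : (round y : ℝ) - n - (y - n) = -(y - round y) := by ring
      rw [h3, abs_neg] at this
      linarith
    have h4 := nint_le_half y
    unfold nint at *
    linarith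

lemma nint_sub_le (b c : ℝ) : nint (b - c) ≤ nint b + nint c := by
  have h := nint_le_abs_sub_int (b - c) (round b - round c)
  calc nint (b - c) ≤ |b - c - ((round b : ℝ) - (round c : ℝ))| := by push_cast at h ⊢; exact h
    _ = |(b - round b) - (c - round c)| := by ring_nf
    _ ≤ |b - round b| + |c - round c| := abs_sub _ _
    _ = nint b + nint c := rfl


noncomputable def rr (α : ℝ) (x : ℕ) : ℝ := nint (α * x)

noncomputable def kfun (α : ℝ) (x : ℕ) : ℕ := ⌊Real.logb 2 (1 / rr α x)⌋₊

section Basic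

variable {α δ : ℝ} (hδ0 : 0 < δ)
  (hδ : ∀ q : ℕ, 1 ≤ q → δ ≤ (q : ℝ) * nint (q * α))

include hδ0 hδ

lemma delta_le_mul_rr {x : ℕ} (hx : 1 ≤ x) : δ ≤ (x : ℝ) * rr α x := by
  have h := hδ x hx
  rwa [show ((x:ℕ):ℝ) * α = α * x by ring] at h

lemma rr_pos {x : ℕ} (hx : 1 ≤ x) : 0 < rr α x := by
  rcases lt_or_ge 0 (rr α x) with h | h
  · exact h
  · exfalso
    have h1 := delta_le_mul_rr hδ0 hδ (α := α) hx
    have h2 : (x:ℝ) * rr α x ≤ 0 := mul_nonpos_of_nonneg_of_nonpos (Nat.cast_nonneg x) h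
    linarith

lemma two_le_inv_rr {x : ℕ} (hx : 1 ≤ x) : 2 ≤ 1 / rr α x := by
  have h1 : rr α x ≤ 1/2 := nint_le_half _
  have h2 : 0 < rr α x := rr_pos hδ0 hδ hx
  rw [le_div_iff₀ h2]; linarith

lemma one_le_kfun {x : ℕ} (hx : 1 ≤ x) : 1 ≤ kfun α x := by
  have h2 : 0 < rr α x := rr_pos hδ0 hδ hx
  have h1 : (1:ℝ) ≤ Real.logb 2 (1 / rr α x) := by
    rw [Real.le_logb_iff_rpow_le one_lt_two (by positivity)]
    rw [Real.rpow_one]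
    exact two_le_inv_rr hδ0 hδ hx
  exact_mod_cast Nat.le_floor (by exact_mod_cast h1)

lemma pow_kfun_le {x : ℕ} (hx : 1 ≤ x) : (2:ℝ) ^ (kfun α x) ≤ 1 / rr α x := by
  have h2 : 0 < rr α x := rr_pos hδ0 hδ hx
  have h0 : 0 ≤ Real.logb 2 (1 / rr α x) := by
    have := two_le_inv_rr hδ0 hδ (α := α) hx
    exact Real.logb_nonneg one_lt_two (by linarith)
  have h1 : ((kfun α x : ℕ):ℝ) ≤ Real.logb 2 (1 / rr α x) := Nat.floor_le h0
  have := (Real.le_logb_iff_rpow_le one_lt_two (by positivity)).mp h1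
  rwa [Real.rpow_natCast] at this

lemma inv_rr_lt {x : ℕ} (hx : 1 ≤ x) : 1 / rr α x < (2:ℝ) ^ (kfun α x + 1) := by
  have h2 : 0 < rr α x := rr_pos hδ0 hδ hx
  have h1 : Real.logb 2 (1 / rr α x) < ((kfun α x : ℕ):ℝ) + 1 := Nat.lt_floor_add_one _
  have h3 : 1 / rr α x < (2:ℝ) ^ (((kfun α x : ℕ):ℝ) + 1) :=
    (Real.logb_lt_iff_lt_rpow one_lt_two (by positivity)).mp h1
  have h4 : ((kfun α x : ℕ):ℝ) + 1 = ((kfun α x + 1 : ℕ) : ℝ) := by push_cast; ring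
  rwa [h4, Real.rpow_natCast] at h3

lemma rr_le_inv_pow {x : ℕ} (hx : 1 ≤ x) : rr α x ≤ 1 / (2:ℝ) ^ (kfun α x) := by
  have h2 : 0 < rr α x := rr_pos hδ0 hδ hx
  have h := pow_kfun_le hδ0 hδ (α := α) hx
  rw [le_div_iff₀ h2] at h
  rw [le_div_iff₀ (by positivity : (0:ℝ) < (2:ℝ) ^ (kfun α x))]
  linarith [h]

lemma delta_pow_le {x : ℕ} (hx : 1 ≤ x) : δ * 2 ^ (kfun α x) ≤ (x:ℝ) := by
  have h1 := delta_le_mul_rr hδ0 hδ (α := α) hx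
  have h2 := rr_le_inv_pow hδ0 hδ (α := α) hx
  have hp : (0:ℝ) < 2 ^ (kfun α x) := by positivity
  have h3 : (x:ℝ) * rr α x ≤ (x:ℝ) * (1 / 2 ^ (kfun α x)) :=
    mul_le_mul_of_nonneg_left h2 (Nat.cast_nonneg x)
  have h4 : δ ≤ (x:ℝ) / 2 ^ (kfun α x) := by
    rw [div_eq_mul_one_div]; linarith
  rw [← le_div_iff₀ hp] at *
  linarith [h4]

lemma log_inv_rr_ge {x : ℕ} (hx : 1 ≤ x) :
    (kfun α x : ℝ) * Real.log 2 ≤ Real.log (1 / rr α x) := by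
  have h1 := pow_kfun_le hδ0 hδ (α := α) hx
  have h2 : Real.log ((2:ℝ)^(kfun α x)) ≤ Real.log (1/rr α x) :=
    Real.log_le_log (by positivity) h1
  rwa [Real.log_pow] at h2

lemma spacing {x y : ℕ} (hx1 : 1 ≤ x) (hxy : x < y) (hke : kfun α x = kfun α y) :
    δ * 2 ^ (kfun α x) / 2 ≤ (y:ℝ) - x := by
  set k := kfun α x with hk
  have hy1 : 1 ≤ y := by omega
  have hrx : rr α x ≤ 1/2^k := rr_le_inv_pow hδ0 hδ hx1
  have hry : rr α y ≤ 1/2^k := by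
    rw [show k = kfun α y from hke]; exact rr_le_inv_pow hδ0 hδ hy1
  have hsub : nint (α*y - α*x) ≤ rr α y + rr α x := nint_sub_le (α*y) (α*x)
  have hq := hδ (y - x) (by omega)
  have hcast : ((y - x:ℕ):ℝ) = (y:ℝ) - x := by
    rw [Nat.cast_sub (le_of_lt hxy)]
  have harg : ((y - x:ℕ):ℝ) * α = α*(y:ℝ) - α*(x:ℝ) := by rw [hcast]; ring
  rw [harg, hcast] at hq
  have hw : (0:ℝ) < (y:ℝ) - x := by
    have : (x:ℝ) < y := by exact_mod_cast hxy
    linarith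
  have hp : (0:ℝ) < (2:ℝ)^k := by positivity
  have h7 : δ ≤ ((y:ℝ)-x)*(2/2^k) := by
    calc δ ≤ ((y:ℝ)-x) * nint (α*(y:ℝ) - α*(x:ℝ)) := hq
      _ ≤ ((y:ℝ)-x) * (rr α y + rr α x) :=
          mul_le_mul_of_nonneg_left hsub hw.le
      _ ≤ ((y:ℝ)-x)*(2/2^k) := by
          apply mul_le_mul_of_nonneg_left _ hw.le
          rw [div_eq_mul_one_div]; linarith
  have key : δ * 2^k ≤ 2*((y:ℝ)-x) := by
    calc δ*2^k ≤ (((y:ℝ)-x)*(2/2^k))*2^k := mul_le_mul_of_nonneg_right h7 hp.le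
      _ = 2*((y:ℝ)-x) := by field_simp
  linarith

end Basic

lemma harmonic_le (n : ℕ) : ∑ j ∈ Finset.Icc 1 n, (1 : ℝ)/j ≤ 1 + Real.log n := by
  induction n with
  | zero => simp
  | succ m ih =>
    rcases Nat.eq_zero_or_pos m with rfl | hm
    · simp
    · rw [Finset.sum_Icc_succ_top (by omega)]
      have key : (1:ℝ)/(m+1) ≤ Real.log (m+1) - Real.log m := by
        have h1 : (0:ℝ) < (m:ℝ)/(m+1) := by positivity
        have := Real.log_le_sub_one_of_pos h1
        have h2 : Real.log ((m:ℝ)/(m+1)) ≤ (m:ℝ)/(m+1) - 1 := this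
        have h3 : Real.log ((m:ℝ)+1) - Real.log m = - Real.log ((m:ℝ)/(m+1)) := by
          rw [Real.log_div (by positivity) (by positivity)]; ring
        have h4 : (m:ℝ)/(m+1) - 1 = -(1/(m+1)) := by field_simp; ring
        rw [h3]; rw [h4] at h2; linarith
      push_cast at key ⊢
      linarith


lemma rpow_step {bb : ℝ} (hb0 : 0 < bb) (hb1 : bb ≤ 1) {x : ℝ} (hx : 1 ≤ x) :
    bb * x^(bb-1) ≤ x^bb - (x-1)^bb := by
  have hx0 : 0 < x := by linarith
  have hu0 : 0 ≤ (x-1)/x := div_nonneg (by linarith) hx0.le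
  have key := Real.geom_mean_le_arith_mean2_weighted hb0.le (by linarith : (0:ℝ) ≤ 1 - bb)
    hu0 zero_le_one (by ring)
  rw [Real.one_rpow, mul_one, mul_one] at key
  have hxb : (0:ℝ) < x^bb := Real.rpow_pos_of_pos hx0 _
  have h2 : (x-1)^bb ≤ (bb*((x-1)/x) + (1-bb)) * x^bb := by
    have h := mul_le_mul_of_nonneg_right key hxb.le
    rwa [← Real.mul_rpow hu0 hx0.le, div_mul_cancel₀ _ (ne_of_gt hx0)] at h
  have h3 : (bb*((x-1)/x) + (1-bb)) * x^bb = x^bb - bb * (x^bb / x) := by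
    field_simp; ring
  have h4 : x^(bb-1) = x^bb / x := by
    rw [Real.rpow_sub hx0, Real.rpow_one]
  rw [h3] at h2
  rw [h4]
  linarith

lemma sum_rpow_neg {a : ℝ} (ha : 0 < a) (ha1 : a < 1) (K : ℕ) :
    ∑ k ∈ Finset.Icc 1 K, (k:ℝ)^(-a) ≤ (K:ℝ)^(1-a)/(1-a) := by
  induction K with
  | zero =>
    simp [Real.zero_rpow (by linarith : (1:ℝ) - a ≠ 0)]
  | succ m ih =>
    rw [Finset.sum_Icc_succ_top (by omega)]
    have hm0 : (0:ℝ) ≤ (m:ℝ) := Nat.cast_nonneg m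
    have hm1 : (1:ℝ) ≤ (m:ℝ) + 1 := by linarith
    have step := rpow_step (bb := 1-a) (by linarith) (by linarith) hm1
    rw [(by ring : (1:ℝ) - a - 1 = -a), (by ring : (m:ℝ) + 1 - 1 = (m:ℝ))] at step
    have ha' : (0:ℝ) < 1 - a := by linarith
    push_cast
    have h5 : (m:ℝ)^(1-a)/(1-a) + ((m:ℝ)+1)^(-a)
        = ((m:ℝ)^(1-a) + (1-a)*(((m:ℝ)+1))^(-a))/(1-a) := by
      field_simp
    have h6 : ((m:ℝ)^(1-a) + (1-a)*(((m:ℝ)+1))^(-a))/(1-a) ≤ ((m:ℝ)+1)^(1-a)/(1-a) := by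
      gcongr
      linarith
    linarith [ih]

lemma sum_inv_sq (K : ℕ) : ∑ k ∈ Finset.Icc 1 K, 1/((k:ℝ))^2 ≤ 2 := by
  rcases Nat.eq_zero_or_pos K with rfl | hK
  · simp
  · have main : ∀ n : ℕ, 1 ≤ n → ∑ k ∈ Finset.Icc 1 n, 1/((k:ℝ))^2 ≤ 2 - 1/(n:ℝ) := by
      intro n hn
      induction n, hn using Nat.le_induction with
      | base => norm_num
      | succ m hm ih =>
        rw [Finset.sum_Icc_succ_top (by omega)]
        have h1 : (0:ℝ) < m := by exact_mod_cast hm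
        have key : 1/((m:ℝ)+1)^2 ≤ 1/(m:ℝ) - 1/((m:ℝ)+1) := by
          rw [div_sub_div _ _ (ne_of_gt h1) (by positivity)]
          rw [div_le_div_iff₀ (by positivity) (by positivity)]
          nlinarith
        push_cast
        linarith
    have hK' : (0:ℝ) < (K:ℝ) := by exact_mod_cast hK
    have h2 : (0:ℝ) ≤ 1/(K:ℝ) := by positivity
    linarith [main K hK]

section Fiber

variable {α δ : ℝ} (hδ0 : 0 < δ)
  (hδ : ∀ q : ℕ, 1 ≤ q → δ ≤ (q : ℝ) * nint (q * α))

include hδ0 hδ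

lemma delta_le_half : δ ≤ 1/2 := by
  have h := hδ 1 le_rfl
  have h2 : nint (((1:ℕ):ℝ) * α) ≤ 1/2 := nint_le_half _
  simpa using le_trans h (by simpa using h2)

set_option maxHeartbeats 1000000 in
lemma fiber_sum_le {a : ℝ} (ha : 0 < a) (ha1 : a < 1) {q k : ℕ} (hq : 2 ≤ q) :
    ∑ x ∈ (Finset.Icc q (q^3)).filter (fun x => kfun α x = k),
      1 / (rr α x * x * (Real.log (1 / rr α x)) ^ a * (Real.log x) ^ (2 - a))
    ≤ 2^(k+1) * (1 / (max (q:ℝ) (δ*2^k) * ((k:ℝ)^a * (Real.log 2)^a)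
          * (Real.log (max (q:ℝ) (δ*2^k)))^(2-a)))
      + (4/δ) * (1 + Real.log (2*(q:ℝ)^3/δ)) / ((Real.log 2)^a * (Real.log q)^(2-a))
          * (k:ℝ)^(-a) := by
  classical
  set l2 := Real.log 2 with hl2def
  have hl2 : 0 < l2 := Real.log_pos one_lt_two
  have hδh : δ ≤ 1/2 := delta_le_half hδ0 hδ
  have hq2 : (2:ℝ) ≤ (q:ℝ) := by exact_mod_cast hq
  have hlq : l2 ≤ Real.log q := Real.log_le_log two_pos hq2
  have hlq0 : 0 < Real.log q := lt_of_lt_of_le hl2 hlq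
  set M := max (q:ℝ) (δ*2^k) with hM
  have hMq : (q:ℝ) ≤ M := le_max_left _ _
  have hM2 : (2:ℝ) ≤ M := le_trans hq2 hMq
  have hM0 : (0:ℝ) < M := by linarith
  have hlM : l2 ≤ Real.log M := Real.log_le_log two_pos hM2
  have hlM0 : (0:ℝ) < Real.log M := lt_of_lt_of_le hl2 hlM
  set Λ : ℝ := 1 + Real.log (2*(q:ℝ)^3/δ) with hΛdef
  have hargΛ : (1:ℝ) ≤ 2*(q:ℝ)^3/δ := by
    rw [le_div_iff₀ hδ0]
    have hq3 : (8:ℝ) ≤ (q:ℝ)^3 := by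
      have := pow_le_pow_left₀ (by norm_num : (0:ℝ) ≤ 2) hq2 3
      norm_num at this; linarith
    nlinarith [hq3]
  have hΛ0 : (0:ℝ) < Λ := by
    have := Real.log_nonneg hargΛ
    rw [hΛdef]; linarith
  set B : ℝ := 2^(k+1) * (1 / (M * ((k:ℝ)^a * l2^a) * (Real.log M)^(2-a))) with hBdef
  set H : ℝ := (4/δ) * Λ / (l2^a * (Real.log q)^(2-a)) * (k:ℝ)^(-a) with hHdef
  have hB0 : 0 ≤ B := by
    rw [hBdef]
    have h1 : (0:ℝ) ≤ (k:ℝ)^a := Real.rpow_nonneg (Nat.cast_nonneg k) _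
    have h2 : (0:ℝ) ≤ l2^a := Real.rpow_nonneg hl2.le _
    have h3 : (0:ℝ) ≤ (Real.log M)^(2-a) := Real.rpow_nonneg hlM0.le _
    positivity
  have hH0 : 0 ≤ H := by
    rw [hHdef]
    have h2 : (0:ℝ) < l2^a := Real.rpow_pos_of_pos hl2 _
    have h3 : (0:ℝ) < (Real.log q)^(2-a) := Real.rpow_pos_of_pos hlq0 _
    have h4 : (0:ℝ) ≤ (k:ℝ)^(-a) := Real.rpow_nonneg (Nat.cast_nonneg k) _
    positivity
  set T := (Finset.Icc q (q^3)).filter (fun x => kfun α x = k) with hT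
  rcases T.eq_empty_or_nonempty with hTe | ⟨x₀, hx₀⟩
  · rw [hTe]; simp; linarith
  have hmem : ∀ x ∈ T, q ≤ x ∧ x ≤ q^3 ∧ kfun α x = k := by
    intro x hx
    rw [hT, Finset.mem_filter, Finset.mem_Icc] at hx
    tauto
  have hk1 : 1 ≤ k := by
    obtain ⟨h1, h2, h3⟩ := hmem x₀ hx₀
    rw [← h3]
    exact one_le_kfun hδ0 hδ (by omega)
  have hk0 : (0:ℝ) < (k:ℝ) := by exact_mod_cast hk1
  have hka : (0:ℝ) < (k:ℝ)^a := Real.rpow_pos_of_pos hk0 _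
  have hl2a : (0:ℝ) < l2^a := Real.rpow_pos_of_pos hl2 _
  set c : ℝ := (k:ℝ)^a * l2^a with hcdef
  have hc0 : (0:ℝ) < c := mul_pos hka hl2a
  set s : ℝ := δ * 2^k / 2 with hsdef
  have hs0 : (0:ℝ) < s := by positivity
  set jf : ℕ → ℕ := fun x => ⌊((x:ℝ) - q)/s⌋₊ with hjfdef
  -- basic facts for members
  have hxfacts : ∀ x ∈ T, (q:ℝ) ≤ x ∧ δ*2^k ≤ (x:ℝ) ∧ (jf x : ℝ) * s ≤ (x:ℝ) - q := by
    intro x hx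
    obtain ⟨h1, h2, h3⟩ := hmem x hx
    have hx1 : 1 ≤ x := by omega
    have hxr : (q:ℝ) ≤ x := by exact_mod_cast h1
    refine ⟨hxr, ?_, ?_⟩
    · have := delta_pow_le hδ0 hδ (α := α) hx1
      rwa [h3] at this
    · have hnn : 0 ≤ ((x:ℝ) - q)/s := by
        apply div_nonneg _ hs0.le; linarith
      have := Nat.floor_le hnn
      rw [← le_div_iff₀ hs0]
      exact this
  -- strict monotonicity of jf on T
  have hjmono : ∀ x ∈ T, ∀ y ∈ T, x < y → jf x < jf y := by
    intro x hx y hy hxy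
    obtain ⟨hx1, hx2, hx3⟩ := hmem x hx
    obtain ⟨hy1, hy2, hy3⟩ := hmem y hy
    have hsp := spacing hδ0 hδ (x := x) (y := y) (by omega) hxy (by rw [hx3, hy3])
    rw [hx3] at hsp
    have hstep : ((x:ℝ) - q)/s + 1 ≤ ((y:ℝ) - q)/s := by
      rw [div_add' _ _ _ (ne_of_gt hs0), div_le_div_iff_of_pos_right hs0]
      rw [hsdef]; linarith
    have hnnx : 0 ≤ ((x:ℝ) - q)/s := by
      apply div_nonneg _ hs0.le
      have : (q:ℝ) ≤ x := by exact_mod_cast hx1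
      linarith
    have h5 : jf x + 1 ≤ jf y := by
      rw [hjfdef]
      simp only []
      calc jf x + 1 = ⌊((x:ℝ) - q)/s + 1⌋₊ := by
            rw [Nat.floor_add_one hnnx]
        _ ≤ ⌊((y:ℝ) - q)/s⌋₊ := Nat.floor_mono hstep
    omega
  -- general per-term bound
  have hterm : ∀ x ∈ T, 1 / (rr α x * x * (Real.log (1 / rr α x)) ^ a * (Real.log x) ^ (2 - a))
      ≤ 2^(k+1) * (1/((x:ℝ) * c * (Real.log x)^(2-a))) := by
    intro x hx
    obtain ⟨h1, h2, h3⟩ := hmem x hx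
    have hx1 : 1 ≤ x := by omega
    have hxq : (q:ℝ) ≤ x := by exact_mod_cast h1
    have hx2 : (2:ℝ) ≤ (x:ℝ) := le_trans hq2 hxq
    have hx0 : (0:ℝ) < x := by linarith
    have hrp : 0 < rr α x := rr_pos hδ0 hδ hx1
    have hlx : l2 ≤ Real.log x := Real.log_le_log two_pos hx2
    have hlx0 : 0 < Real.log x := lt_of_lt_of_le hl2 hlx
    have hL2 : (0:ℝ) < (Real.log x)^(2-a) := Real.rpow_pos_of_pos hlx0 _
    have hL1 : (k:ℝ)*l2 ≤ Real.log (1 / rr α x) := by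
      have := log_inv_rr_ge hδ0 hδ (α := α) hx1
      rwa [h3] at this
    have hL1a : c ≤ (Real.log (1 / rr α x))^a := by
      rw [hcdef, ← Real.mul_rpow hk0.le hl2.le]
      exact Real.rpow_le_rpow (by positivity) hL1 ha.le
    have hL1apos : 0 < (Real.log (1 / rr α x))^a := lt_of_lt_of_le hc0 hL1a
    have hinv : 1/rr α x ≤ 2^(k+1) := by
      have := inv_rr_lt hδ0 hδ (α := α) hx1
      rw [h3] at this
      linarith
    have hDpos : (0:ℝ) < (x:ℝ) * c * (Real.log x)^(2-a) := by positivity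
    have hD : (x:ℝ) * c * (Real.log x)^(2-a)
        ≤ (x:ℝ) * (Real.log (1 / rr α x))^a * (Real.log x)^(2-a) := by
      apply mul_le_mul_of_nonneg_right _ hL2.le
      exact mul_le_mul_of_nonneg_left hL1a hx0.le
    have hrw : rr α x * x * (Real.log (1/rr α x))^a * (Real.log x)^(2-a)
        = rr α x * ((x:ℝ) * (Real.log (1/rr α x))^a * (Real.log x)^(2-a)) := by ring
    rw [hrw, ← one_div_mul_one_div]
    apply mul_le_mul hinv
    · exact one_div_le_one_div_of_le hDpos hD
    · positivity
    · positivity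
  -- split T
  rw [← Finset.sum_filter_add_sum_filter_not T (fun x => jf x = 0)]
  set T0 := T.filter (fun x => jf x = 0) with hT0
  set T1 := T.filter (fun x => ¬ jf x = 0) with hT1
  -- T0 part
  have hcard : T0.card ≤ 1 := by
    rw [Finset.card_le_one]
    intro x hx y hy
    obtain ⟨hxT, hjx⟩ := Finset.mem_filter.mp hx
    obtain ⟨hyT, hjy⟩ := Finset.mem_filter.mp hy
    by_contra hne
    rcases Nat.lt_or_ge x y with hlt | hge
    · have := hjmono x hxT y hyT hlt; omega
    · have hlt2 : y < x := by omega
      have := hjmono y hyT x hxT hlt2; omega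
  have hBbound : ∀ x ∈ T0, 1 / (rr α x * x * (Real.log (1 / rr α x)) ^ a
      * (Real.log x) ^ (2 - a)) ≤ B := by
    intro x hx
    have hxT : x ∈ T := (Finset.mem_filter.mp hx).1
    refine le_trans (hterm x hxT) ?_
    obtain ⟨hxq, hxd, _⟩ := hxfacts x hxT
    have hxM : M ≤ (x:ℝ) := max_le hxq hxd
    have hlxM : Real.log M ≤ Real.log x := Real.log_le_log hM0 hxM
    have hrp2a : (Real.log M)^(2-a) ≤ (Real.log x)^(2-a) :=
      Real.rpow_le_rpow hlM0.le hlxM (by linarith)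
    have hlMa : (0:ℝ) < (Real.log M)^(2-a) := Real.rpow_pos_of_pos hlM0 _
    rw [hBdef]
    apply mul_le_mul_of_nonneg_left _ (by positivity)
    apply one_div_le_one_div_of_le (by positivity)
    calc M * ((k:ℝ)^a * l2^a) * (Real.log M)^(2-a) = M * c * (Real.log M)^(2-a) := by
          rw [hcdef]
      _ ≤ (x:ℝ) * c * (Real.log x)^(2-a) := by
          apply mul_le_mul _ hrp2a hlMa.le (by positivity)
          exact mul_le_mul_of_nonneg_right hxM hc0.le
  have hT0sum : ∑ x ∈ T0, 1 / (rr α x * x * (Real.log (1 / rr α x)) ^ a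
      * (Real.log x) ^ (2 - a)) ≤ B := by
    calc ∑ x ∈ T0, 1 / (rr α x * x * (Real.log (1 / rr α x)) ^ a * (Real.log x) ^ (2 - a))
        ≤ T0.card • B := Finset.sum_le_card_nsmul _ _ _ hBbound
      _ = (T0.card : ℝ) * B := nsmul_eq_mul _ _
      _ ≤ 1 * B := by
          apply mul_le_mul_of_nonneg_right _ hB0
          exact_mod_cast hcard
      _ = B := one_mul B
  -- T1 part
  set J := ⌊((q:ℝ)^3 - q)/s⌋₊ with hJdef
  set Cst : ℝ := 2^(k+1) * (1/(s * c * (Real.log q)^(2-a))) with hCstdef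
  have hlqa : (0:ℝ) < (Real.log q)^(2-a) := Real.rpow_pos_of_pos hlq0 _
  have hCst0 : 0 ≤ Cst := by rw [hCstdef]; positivity
  have hH1 : ∀ x ∈ T1, 1 / (rr α x * x * (Real.log (1 / rr α x)) ^ a
      * (Real.log x) ^ (2 - a)) ≤ Cst * (1/(jf x:ℝ)) := by
    intro x hx
    obtain ⟨hxT, hj0⟩ := Finset.mem_filter.mp hx
    have hj1 : 1 ≤ jf x := Nat.one_le_iff_ne_zero.mpr hj0
    have hjr : (1:ℝ) ≤ (jf x : ℝ) := by exact_mod_cast hj1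
    refine le_trans (hterm x hxT) ?_
    obtain ⟨hxq, hxd, hjs⟩ := hxfacts x hxT
    have hq0 : (0:ℝ) < q := by linarith
    have hx0 : (0:ℝ) < x := by linarith
    have hxjs : (jf x:ℝ) * s ≤ (x:ℝ) := by linarith
    have hlx : Real.log q ≤ Real.log x := Real.log_le_log hq0 hxq
    have hrpa : (Real.log q)^(2-a) ≤ (Real.log x)^(2-a) :=
      Real.rpow_le_rpow hlq0.le hlx (by linarith)
    have hd : (s * c * (Real.log q)^(2-a)) * (jf x:ℝ) ≤ (x:ℝ) * c * (Real.log x)^(2-a) := by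
      calc (s * c * (Real.log q)^(2-a)) * (jf x:ℝ)
          = ((jf x:ℝ) * s) * (c * (Real.log q)^(2-a)) := by ring
        _ ≤ (x:ℝ) * (c * (Real.log x)^(2-a)) := by
            apply mul_le_mul hxjs _ (by positivity) hx0.le
            exact mul_le_mul_of_nonneg_left hrpa hc0.le
        _ = (x:ℝ) * c * (Real.log x)^(2-a) := by ring
    calc 2^(k+1) * (1/((x:ℝ) * c * (Real.log x)^(2-a)))
        ≤ 2^(k+1) * ((1/(s * c * (Real.log q)^(2-a))) * (1/(jf x:ℝ))) := by
          apply mul_le_mul_of_nonneg_left _ (by positivity)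
          rw [one_div_mul_one_div]
          apply one_div_le_one_div_of_le (by positivity) hd
      _ = Cst * (1/(jf x:ℝ)) := by rw [hCstdef]; ring
  have hinj : ∀ x ∈ T1, ∀ y ∈ T1, jf x = jf y → x = y := by
    intro x hx y hy hje
    have hxT : x ∈ T := (Finset.mem_filter.mp hx).1
    have hyT : y ∈ T := (Finset.mem_filter.mp hy).1
    by_contra hne
    rcases Nat.lt_or_ge x y with hlt | hge
    · have := hjmono x hxT y hyT hlt; omega
    · have hlt2 : y < x := by omega
      have := hjmono y hyT x hxT hlt2; omega
  have hharm : ∑ x ∈ T1, (1/(jf x:ℝ)) ≤ Λ := by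
    have himg : ∑ j ∈ T1.image jf, (1/(j:ℝ)) = ∑ x ∈ T1, (1/(jf x:ℝ)) :=
      Finset.sum_image hinj
    rw [← himg]
    have hsub2 : T1.image jf ⊆ Finset.Icc 1 J := by
      intro j hj
      obtain ⟨x, hx, rfl⟩ := Finset.mem_image.mp hj
      obtain ⟨hxT, hj0⟩ := Finset.mem_filter.mp hx
      obtain ⟨h1, h2, h3⟩ := hmem x hxT
      rw [Finset.mem_Icc]
      constructor
      · omega
      · apply Nat.floor_mono
        have hx3 : (x:ℝ) ≤ (q:ℝ)^3 := by exact_mod_cast h2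
        gcongr
    calc ∑ j ∈ T1.image jf, (1/(j:ℝ))
        ≤ ∑ j ∈ Finset.Icc 1 J, (1/(j:ℝ)) := by
          apply Finset.sum_le_sum_of_subset_of_nonneg hsub2
          intro j _ _
          positivity
      _ ≤ 1 + Real.log J := harmonic_le J
      _ ≤ Λ := by
          have hq4 : (4:ℝ) ≤ (q:ℝ)*(q:ℝ) := by nlinarith [hq2]
          have hq30 : (0:ℝ) ≤ (q:ℝ)^3 - q := by nlinarith [hq4, hq2]
          have hJle : (J:ℝ) ≤ 2*(q:ℝ)^3/δ := by
            have h1 : (J:ℝ) ≤ ((q:ℝ)^3 - q)/s := Nat.floor_le (div_nonneg hq30 hs0.le)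
            have h2 : ((q:ℝ)^3 - q)/s ≤ (q:ℝ)^3/s := by
              gcongr
              linarith
            have h3 : (q:ℝ)^3/s ≤ 2*(q:ℝ)^3/δ := by
              rw [hsdef, div_le_div_iff₀ (by positivity) hδ0]
              have h2k : (1:ℝ) ≤ 2^k := one_le_pow₀ (by norm_num)
              have hq3p : (0:ℝ) < (q:ℝ)^3 := by positivity
              have key : (0:ℝ) ≤ (q:ℝ)^3 * δ * (2^k - 1) :=
                mul_nonneg (mul_nonneg hq3p.le hδ0.le) (by linarith)
              nlinarith [key]
            linarith
          rcases Nat.eq_zero_or_pos J with hJ0 | hJpos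
          · rw [hJ0]
            simp only [Nat.cast_zero, Real.log_zero]
            have := Real.log_nonneg hargΛ
            rw [hΛdef]; linarith
          · have hJr : (0:ℝ) < (J:ℝ) := by exact_mod_cast hJpos
            have := Real.log_le_log hJr hJle
            rw [hΛdef]; linarith
  have hT1sum : ∑ x ∈ T1, 1 / (rr α x * x * (Real.log (1 / rr α x)) ^ a
      * (Real.log x) ^ (2 - a)) ≤ Cst * Λ := by
    calc ∑ x ∈ T1, 1 / (rr α x * x * (Real.log (1 / rr α x)) ^ a * (Real.log x) ^ (2 - a))
        ≤ ∑ x ∈ T1, Cst * (1/(jf x:ℝ)) := Finset.sum_le_sum hH1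
      _ = Cst * ∑ x ∈ T1, (1/(jf x:ℝ)) := by rw [Finset.mul_sum]
      _ ≤ Cst * Λ := mul_le_mul_of_nonneg_left hharm hCst0
  have hCstΛ : Cst * Λ = H := by
    rw [hCstdef, hHdef, hcdef, hsdef, Real.rpow_neg (Nat.cast_nonneg k)]
    have hne1 : ((k:ℝ)^a) ≠ 0 := ne_of_gt hka
    have hne2 : (l2^a) ≠ 0 := ne_of_gt hl2a
    have hne3 : ((Real.log q)^(2-a)) ≠ 0 := ne_of_gt hlqa
    have hne4 : ((2:ℝ)^k) ≠ 0 := by positivity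
    have hne5 : δ ≠ 0 := ne_of_gt hδ0
    field_simp
    ring
  rw [← hCstΛ]
  exact add_le_add hT0sum hT1sum

end Fiber

lemma sum_range_le_sum_Icc (f : ℕ → ℝ) (hf : ∀ k, 0 ≤ f k) (hf0 : f 0 = 0) (K : ℕ) :
    ∑ k ∈ Finset.range K, f k ≤ ∑ k ∈ Finset.Icc 1 K, f k := by
  have hsub : Finset.range K ⊆ Finset.Icc 0 K := by
    intro k hk
    rw [Finset.mem_range] at hk
    rw [Finset.mem_Icc]
    omega
  have hins : Finset.Icc 0 K = insert 0 (Finset.Icc 1 K) := by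
    ext j; simp [Finset.mem_Icc, Finset.mem_insert]; omega
  calc ∑ k ∈ Finset.range K, f k ≤ ∑ k ∈ Finset.Icc 0 K, f k :=
        Finset.sum_le_sum_of_subset_of_nonneg hsub (fun i _ _ => hf i)
    _ = f 0 + ∑ k ∈ Finset.Icc 1 K, f k := by
        rw [hins, Finset.sum_insert (by simp)]
    _ = ∑ k ∈ Finset.Icc 1 K, f k := by rw [hf0, zero_add]

lemma geom_sum_aux (n : ℕ) : ∑ k ∈ Finset.range n, (2:ℝ)^(k+1) = 2^(n+1) - 2 := by
  induction n with
  | zero => simp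
  | succ m ih =>
    rw [Finset.sum_range_succ, ih, pow_succ 2 (m+1)]
    ring

set_option maxHeartbeats 1000000 in
lemma Bsum_le {δ : ℝ} (hδ0 : 0 < δ) (hδh : δ ≤ 1/2) {a : ℝ} (ha : 0 < a) (ha1 : a < 1)
    {q : ℕ} (hq : 2 ≤ q) (K : ℕ) :
    ∑ k ∈ Finset.range K, 2^(k+1) * (1 / (max (q:ℝ) (δ*2^k) * ((k:ℝ)^a * (Real.log 2)^a)
          * (Real.log (max (q:ℝ) (δ*2^k)))^(2-a)))
    ≤ 4/(δ*(Real.log 2)^2) + (⌈2 * Real.log (1/δ) / Real.log 2⌉₊ : ℝ) * ((2/δ)/(Real.log 2)^2)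
      + 16/(δ*(Real.log 2)^2) := by
  classical
  set l2 := Real.log 2 with hl2def
  have hl2 : 0 < l2 := Real.log_pos one_lt_two
  set k₀ : ℕ := ⌈2 * Real.log (1/δ) / l2⌉₊ with hk₀def
  have hq2 : (2:ℝ) ≤ (q:ℝ) := by exact_mod_cast hq
  have hq0 : (0:ℝ) < q := by linarith
  have hlq : l2 ≤ Real.log q := Real.log_le_log two_pos hq2
  have hlq0 : 0 < Real.log q := lt_of_lt_of_le hl2 hlq
  have hl2a : (0:ℝ) < l2^a := Real.rpow_pos_of_pos hl2 _
  have hl2sq : l2^a * l2^(2-a) = l2^2 := by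
    rw [← Real.rpow_natCast l2 2, ← Real.rpow_add hl2]
    norm_num
  set B : ℕ → ℝ := fun k => 2^(k+1) * (1 / (max (q:ℝ) (δ*2^k) * ((k:ℝ)^a * l2^a)
          * (Real.log (max (q:ℝ) (δ*2^k)))^(2-a))) with hBdef
  set Q1 : ℕ → ℝ := fun k => if δ*2^k ≤ (q:ℝ) then 2^(k+1)/((q:ℝ)*l2^2) else 0 with hQ1def
  set Q2 : ℕ → ℝ := fun k => if ((q:ℝ) < δ*2^k ∧ k < k₀) then (2/δ)/l2^2 else 0 with hQ2def
  set Q3 : ℕ → ℝ := fun k =>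
    if ((q:ℝ) < δ*2^k ∧ k₀ ≤ k) then (8/(δ*l2^2)) * (1/((k:ℝ))^2) else 0 with hQ3def
  have hQ1nn : ∀ k, 0 ≤ Q1 k := by
    intro k; rw [hQ1def]; dsimp only; split
    · positivity
    · exact le_rfl
  have hQ2nn : ∀ k, 0 ≤ Q2 k := by
    intro k; rw [hQ2def]; dsimp only; split
    · positivity
    · exact le_rfl
  have hQ3nn : ∀ k, 0 ≤ Q3 k := by
    intro k; rw [hQ3def]; dsimp only; split
    · positivity
    · exact le_rfl
  -- pointwise bound
  have hpoint : ∀ k, B k ≤ Q1 k + Q2 k + Q3 k := by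
    intro k
    rcases Nat.eq_zero_or_pos k with rfl | hk1
    · have hB0 : B 0 = 0 := by
        rw [hBdef]
        dsimp only
        rw [Nat.cast_zero, Real.zero_rpow (ne_of_gt ha)]
        simp
      rw [hB0]
      have := hQ1nn 0; have := hQ2nn 0; have := hQ3nn 0
      linarith
    have hk0 : (0:ℝ) < (k:ℝ) := Nat.cast_pos.mpr hk1
    have hka : (0:ℝ) < (k:ℝ)^a := Real.rpow_pos_of_pos hk0 _
    have hka1 : (1:ℝ) ≤ (k:ℝ)^a := by
      have := Real.rpow_le_rpow (by norm_num : (0:ℝ) ≤ 1) (Nat.one_le_cast.mpr hk1) ha.le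
      rwa [Real.one_rpow] at this
    have h2k : (0:ℝ) < 2^k := by positivity
    rcases le_or_gt (δ*2^k) (q:ℝ) with hcase | hcase
    · -- M = q
      have hMeq : max (q:ℝ) (δ*2^k) = (q:ℝ) := max_eq_left hcase
      have hQ1eq : Q1 k = 2^(k+1)/((q:ℝ)*l2^2) := by rw [hQ1def]; exact if_pos hcase
      have hlqa : (0:ℝ) < (Real.log q)^(2-a) := Real.rpow_pos_of_pos hlq0 _
      have hl2qa : l2^(2-a) ≤ (Real.log q)^(2-a) :=
        Real.rpow_le_rpow hl2.le hlq (by linarith)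
      have hden : (q:ℝ)*l2^2 ≤ (q:ℝ) * ((k:ℝ)^a * l2^a) * (Real.log q)^(2-a) := by
        calc (q:ℝ)*l2^2 = (q:ℝ) * (1 * l2^a) * l2^(2-a) := by rw [one_mul, ← hl2sq]; ring
          _ ≤ (q:ℝ) * ((k:ℝ)^a * l2^a) * (Real.log q)^(2-a) := by
              apply mul_le_mul _ hl2qa (by positivity) (by positivity)
              apply mul_le_mul_of_nonneg_left _ hq0.le
              exact mul_le_mul_of_nonneg_right hka1 hl2a.le
      have hBle : B k ≤ Q1 k := by
        rw [hBdef, hQ1eq]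
        dsimp only
        rw [hMeq, div_eq_mul_one_div ((2:ℝ)^(k+1))]
        apply mul_le_mul_of_nonneg_left _ (by positivity)
        exact one_div_le_one_div_of_le (by positivity) hden
      have := hQ2nn k; have := hQ3nn k
      linarith
    · -- M = δ2^k
      have hMeq : max (q:ℝ) (δ*2^k) = δ*2^k := max_eq_right hcase.le
      have hlogM : Real.log q ≤ Real.log (δ*2^k) := Real.log_le_log hq0 hcase.le
      have hlM0 : 0 < Real.log (δ*2^k) := lt_of_lt_of_le hlq0 hlogM
      rcases Nat.lt_or_ge k k₀ with hkk | hkk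
      · -- middle regime
        have hQ2eq : Q2 k = (2/δ)/l2^2 := by rw [hQ2def]; exact if_pos ⟨hcase, hkk⟩
        have hl2Ma : l2^(2-a) ≤ (Real.log (δ*2^k))^(2-a) :=
          Real.rpow_le_rpow hl2.le (le_trans hlq hlogM) (by linarith)
        have hden : (δ*2^k)*l2^2 ≤ (δ*2^k) * ((k:ℝ)^a * l2^a) * (Real.log (δ*2^k))^(2-a) := by
          calc (δ*2^k)*l2^2 = (δ*2^k) * (1 * l2^a) * l2^(2-a) := by
                rw [one_mul, ← hl2sq]; ring
            _ ≤ _ := by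
              apply mul_le_mul _ hl2Ma (by positivity) (by positivity)
              apply mul_le_mul_of_nonneg_left _ (by positivity)
              exact mul_le_mul_of_nonneg_right hka1 hl2a.le
        have hBle : B k ≤ Q2 k := by
          rw [hBdef, hQ2eq]
          dsimp only
          rw [hMeq]
          calc 2^(k+1) * (1 / ((δ*2^k) * ((k:ℝ)^a * l2^a) * (Real.log (δ*2^k))^(2-a)))
              ≤ 2^(k+1) * (1/((δ*2^k)*l2^2)) := by
                apply mul_le_mul_of_nonneg_left _ (by positivity)
                exact one_div_le_one_div_of_le (by positivity) hden
            _ = (2/δ)/l2^2 := by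
                rw [pow_succ]
                field_simp
        have := hQ1nn k; have := hQ3nn k
        linarith
      · -- tail regime
        have hQ3eq : Q3 k = (8/(δ*l2^2)) * (1/((k:ℝ))^2) := by
          rw [hQ3def]; exact if_pos ⟨hcase, hkk⟩
        have hlMeq : Real.log (δ*2^k) = Real.log δ + (k:ℝ)*l2 := by
          rw [Real.log_mul (ne_of_gt hδ0) (ne_of_gt h2k), Real.log_pow]
        have hceil : 2 * Real.log (1/δ) / l2 ≤ (k₀:ℝ) := Nat.le_ceil _
        have hkge : (k₀:ℝ) ≤ (k:ℝ) := by exact_mod_cast hkk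
        have hklog : 2 * Real.log (1/δ) ≤ (k:ℝ)*l2 := by
          have h1 : 2 * Real.log (1/δ) / l2 ≤ (k:ℝ) := le_trans hceil hkge
          calc 2 * Real.log (1/δ) = (2 * Real.log (1/δ) / l2) * l2 := by field_simp
            _ ≤ (k:ℝ)*l2 := mul_le_mul_of_nonneg_right h1 hl2.le
        have hlogdelta : Real.log (1/δ) = - Real.log δ := by
          rw [one_div, Real.log_inv]
        have hlMge : (k:ℝ)*l2/2 ≤ Real.log (δ*2^k) := by
          rw [hlMeq]
          rw [hlogdelta] at hklog
          linarith
        have hkl20 : (0:ℝ) < (k:ℝ)*l2/2 := by positivity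
        have hstep1 : ((k:ℝ)*l2/2)^(2-a) ≤ (Real.log (δ*2^k))^(2-a) :=
          Real.rpow_le_rpow hkl20.le hlMge (by linarith)
        have hkpow : (k:ℝ)^a * (k:ℝ)^(2-a) = (k:ℝ)^2 := by
          rw [← Real.rpow_natCast (k:ℝ) 2, ← Real.rpow_add hk0]
          norm_num
        have hsplitm : ((k:ℝ)*l2/2)^(2-a) = (k:ℝ)^(2-a) * (l2/2)^(2-a) := by
          rw [show (k:ℝ)*l2/2 = (k:ℝ)*(l2/2) by ring]
          exact Real.mul_rpow hk0.le (by positivity)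
        have hl2div : (l2/2)^(2-a) = l2^(2-a)/2^(2-a) := Real.div_rpow hl2.le (by norm_num : (0:ℝ) ≤ 2) _
        have h2a4 : (2:ℝ)^(2-a) ≤ 4 := by
          have h := Real.rpow_le_rpow_of_exponent_le (by norm_num : (1:ℝ) ≤ 2)
            (by linarith : 2-a ≤ (2:ℝ))
          rwa [show (2:ℝ)^(2:ℝ) = 4 by
            rw [show (2:ℝ) = ((2:ℕ):ℝ) by norm_num, Real.rpow_natCast]; norm_num] at h
        have h2a0 : (0:ℝ) < 2^(2-a) := Real.rpow_pos_of_pos two_pos _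
        have hdenlow : (k:ℝ)^2*l2^2/4 ≤ ((k:ℝ)^a * l2^a) * (Real.log (δ*2^k))^(2-a) := by
          calc (k:ℝ)^2*l2^2/4 ≤ (k:ℝ)^2*l2^2/2^(2-a) := by
                apply div_le_div_of_nonneg_left (by positivity) h2a0 h2a4
            _ = ((k:ℝ)^a * l2^a) * (((k:ℝ)*l2/2)^(2-a)) := by
                rw [hsplitm, hl2div, ← hkpow, ← hl2sq]
                field_simp
            _ ≤ ((k:ℝ)^a * l2^a) * (Real.log (δ*2^k))^(2-a) := by
                apply mul_le_mul_of_nonneg_left hstep1 (by positivity)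
        have hBle : B k ≤ Q3 k := by
          rw [hBdef, hQ3eq]
          dsimp only
          rw [hMeq]
          calc 2^(k+1) * (1 / ((δ*2^k) * ((k:ℝ)^a * l2^a) * (Real.log (δ*2^k))^(2-a)))
              ≤ 2^(k+1) * (1/((δ*2^k) * ((k:ℝ)^2*l2^2/4))) := by
                apply mul_le_mul_of_nonneg_left _ (by positivity)
                apply one_div_le_one_div_of_le (by positivity)
                calc (δ*2^k) * ((k:ℝ)^2*l2^2/4)
                    = (2:ℝ)^k * (δ * ((k:ℝ)^2*l2^2/4)) := by ring
                  _ ≤ (2:ℝ)^k * (δ * (((k:ℝ)^a*l2^a) * (Real.log (δ*2^k))^(2-a))) := by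
                      apply mul_le_mul_of_nonneg_left _ (by positivity)
                      exact mul_le_mul_of_nonneg_left hdenlow hδ0.le
                  _ = (δ*2^k) * ((k:ℝ)^a*l2^a) * (Real.log (δ*2^k))^(2-a) := by ring
            _ = (8/(δ*l2^2)) * (1/((k:ℝ))^2) := by
                rw [pow_succ]
                field_simp
                ring
        have := hQ1nn k; have := hQ2nn k
        linarith
  -- sum of Q1
  have hQ1sum : ∑ k ∈ Finset.range K, Q1 k ≤ 4/(δ*l2^2) := by
    have hqδ : (1:ℝ) ≤ (q:ℝ)/δ := by
      rw [le_div_iff₀ hδ0]; linarith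
    set fl := ⌊Real.logb 2 ((q:ℝ)/δ)⌋₊ with hfldef
    have hlogbnn : 0 ≤ Real.logb 2 ((q:ℝ)/δ) := Real.logb_nonneg one_lt_two hqδ
    have hss : (Finset.range K).filter (fun k => δ*2^k ≤ (q:ℝ)) ⊆ Finset.range (fl+1) := by
      intro k hk
      obtain ⟨-, hk2⟩ := Finset.mem_filter.mp hk
      have h1 : (2:ℝ)^k ≤ (q:ℝ)/δ := by
        rw [le_div_iff₀ hδ0]; linarith
      have h2 : ((k:ℕ):ℝ) ≤ Real.logb 2 ((q:ℝ)/δ) := by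
        rw [Real.le_logb_iff_rpow_le one_lt_two (by linarith)]
        rwa [Real.rpow_natCast]
      have h3 : k ≤ fl := Nat.le_floor h2
      rw [Finset.mem_range]; omega
    have h2fl : (2:ℝ)^fl ≤ (q:ℝ)/δ := by
      have h1 : ((fl:ℕ):ℝ) ≤ Real.logb 2 ((q:ℝ)/δ) := Nat.floor_le hlogbnn
      have := (Real.le_logb_iff_rpow_le one_lt_two (by linarith)).mp h1
      rwa [Real.rpow_natCast] at this
    calc ∑ k ∈ Finset.range K, Q1 k
        = ∑ k ∈ (Finset.range K).filter (fun k => δ*2^k ≤ (q:ℝ)), 2^(k+1)/((q:ℝ)*l2^2) := by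
          rw [Finset.sum_filter]
      _ ≤ ∑ k ∈ Finset.range (fl+1), 2^(k+1)/((q:ℝ)*l2^2) := by
          apply Finset.sum_le_sum_of_subset_of_nonneg hss
          intro i _ _
          positivity
      _ = (∑ k ∈ Finset.range (fl+1), (2:ℝ)^(k+1))/((q:ℝ)*l2^2) := by
          rw [← Finset.sum_div]
      _ = ((2:ℝ)^(fl+2) - 2)/((q:ℝ)*l2^2) := by rw [geom_sum_aux]
      _ ≤ (4*((q:ℝ)/δ))/((q:ℝ)*l2^2) := by
          apply div_le_div_of_nonneg_right _ (by positivity)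
          have he : (2:ℝ)^(fl+2) = 4*2^fl := by rw [pow_add]; ring
          rw [he]
          nlinarith [h2fl]
      _ = 4/(δ*l2^2) := by
          field_simp
  -- sum of Q2
  have hQ2sum : ∑ k ∈ Finset.range K, Q2 k ≤ (k₀:ℝ) * ((2/δ)/l2^2) := by
    have hpt : ∀ k ∈ Finset.range K, Q2 k ≤ (if k < k₀ then (2/δ)/l2^2 else 0) := by
      intro k _
      rw [hQ2def]; dsimp only
      split_ifs with h1 h2
      · exact le_rfl
      · exact absurd h1.2 h2
      · positivity
      · exact le_rfl
    calc ∑ k ∈ Finset.range K, Q2 k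
        ≤ ∑ k ∈ Finset.range K, (if k < k₀ then (2/δ)/l2^2 else 0) := Finset.sum_le_sum hpt
      _ = ∑ k ∈ (Finset.range K).filter (fun k => k < k₀), (2/δ)/l2^2 :=
          (Finset.sum_filter _ _).symm
      _ = (((Finset.range K).filter (fun k => k < k₀)).card : ℝ) * ((2/δ)/l2^2) := by
          rw [Finset.sum_const, nsmul_eq_mul]
      _ ≤ (k₀:ℝ) * ((2/δ)/l2^2) := by
          apply mul_le_mul_of_nonneg_right _ (by positivity)
          have hsub : (Finset.range K).filter (fun k => k < k₀) ⊆ Finset.range k₀ := by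
            intro k hk
            rw [Finset.mem_range]
            exact (Finset.mem_filter.mp hk).2
          have hcard := Finset.card_le_card hsub
          rw [Finset.card_range] at hcard
          exact_mod_cast hcard
  -- sum of Q3
  have hQ3sum : ∑ k ∈ Finset.range K, Q3 k ≤ 16/(δ*l2^2) := by
    have hpt : ∀ k ∈ Finset.range K, Q3 k ≤ (8/(δ*l2^2)) * (1/((k:ℝ))^2) := by
      intro k _
      rw [hQ3def]; dsimp only
      split_ifs with h1
      · exact le_rfl
      · positivity
    calc ∑ k ∈ Finset.range K, Q3 k
        ≤ ∑ k ∈ Finset.range K, (8/(δ*l2^2)) * (1/((k:ℝ))^2) := Finset.sum_le_sum hpt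
      _ = (8/(δ*l2^2)) * ∑ k ∈ Finset.range K, (1/((k:ℝ))^2) := by rw [Finset.mul_sum]
      _ ≤ (8/(δ*l2^2)) * 2 := by
          apply mul_le_mul_of_nonneg_left _ (by positivity)
          calc ∑ k ∈ Finset.range K, (1/((k:ℝ))^2)
              ≤ ∑ k ∈ Finset.Icc 1 K, (1/((k:ℝ))^2) :=
                sum_range_le_sum_Icc _ (fun k => by positivity) (by norm_num) K
            _ ≤ 2 := sum_inv_sq K
      _ = 16/(δ*l2^2) := by ring
  calc ∑ k ∈ Finset.range K, B k
      ≤ ∑ k ∈ Finset.range K, (Q1 k + Q2 k + Q3 k) :=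
        Finset.sum_le_sum (fun k _ => hpoint k)
    _ = ∑ k ∈ Finset.range K, Q1 k + ∑ k ∈ Finset.range K, Q2 k
        + ∑ k ∈ Finset.range K, Q3 k := by
        rw [Finset.sum_add_distrib, Finset.sum_add_distrib]
    _ ≤ 4/(δ*l2^2) + (k₀:ℝ)*((2/δ)/l2^2) + 16/(δ*l2^2) :=
        add_le_add (add_le_add hQ1sum hQ2sum) hQ3sum

set_option maxHeartbeats 1000000 in
theorem stmt_2 (α : ℝ) (hα : ∃ δ > 0, ∀ q : ℕ, 1 ≤ q → δ ≤ (q : ℝ) * nint (q * α))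
    (a : ℝ) (ha : 0 < a) (ha1 : a < 1) :
    ∃ C > 0, ∀ q : ℕ, 2 ≤ q →
      ∑ x ∈ Finset.Icc q (q ^ 3),
        1 / (nint (α * x) * x * (Real.log (1 / nint (α * x))) ^ a
              * (Real.log x) ^ (2 - a)) ≤ C := by
  obtain ⟨δ, hδ0, hδ⟩ := hα
  have hδh : δ ≤ 1/2 := delta_le_half hδ0 hδ
  set l2 := Real.log 2 with hl2def
  have hl2 : 0 < l2 := Real.log_pos one_lt_two
  have hinvδ2 : (2:ℝ) ≤ 1/δ := by rw [le_div_iff₀ hδ0]; linarith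
  have hlogδ : l2 ≤ Real.log (1/δ) := Real.log_le_log two_pos hinvδ2
  have hlogδ0 : 0 ≤ Real.log (1/δ) := le_trans hl2.le hlogδ
  have hlog2δ0 : 0 ≤ Real.log (2/δ) := Real.log_nonneg (by rw [le_div_iff₀ hδ0]; linarith)
  set k₀ : ℕ := ⌈2 * Real.log (1/δ) / l2⌉₊ with hk₀def
  set c₃ : ℝ := 3/l2 + Real.log (1/δ)/l2^2 + 1/l2 with hc₃def
  set c₅ : ℝ := 3 + (1 + Real.log (2/δ))/l2 with hc₅def
  have hc₃0 : 0 < c₃ := by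
    have h2 : 0 ≤ Real.log (1/δ)/l2^2 := div_nonneg hlogδ0 (by positivity)
    have h3 : (0:ℝ) < 3/l2 := by positivity
    have h4 : (0:ℝ) < 1/l2 := by positivity
    rw [hc₃def]; linarith
  have hc₅0 : 0 < c₅ := by
    have h2 : 0 ≤ (1 + Real.log (2/δ))/l2 := div_nonneg (by linarith) hl2.le
    rw [hc₅def]; linarith
  set CB : ℝ := 4/(δ*l2^2) + (k₀:ℝ)*((2/δ)/l2^2) + 16/(δ*l2^2) with hCBdef
  set CH : ℝ := 4*c₅*c₃^(1-a)/(δ*l2^a*(1-a)) with hCHdef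
  have hCB0 : 0 < CB := by
    have t1 : (0:ℝ) < 4/(δ*l2^2) := by positivity
    have t3 : (0:ℝ) < 16/(δ*l2^2) := by positivity
    have t2 : (0:ℝ) ≤ (k₀:ℝ)*((2/δ)/l2^2) := by positivity
    rw [hCBdef]; linarith
  have hCH0 : 0 < CH := by
    rw [hCHdef]
    apply div_pos
    · have := Real.rpow_pos_of_pos hc₃0 (1-a)
      nlinarith [hc₅0]
    · have h1 : (0:ℝ) < l2^a := Real.rpow_pos_of_pos hl2 _
      have h2 : (0:ℝ) < 1 - a := by linarith
      positivity
  refine ⟨CB + CH, by linarith, ?_⟩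
  intro q hq
  have hq2 : (2:ℝ) ≤ (q:ℝ) := by exact_mod_cast hq
  have hq0 : (0:ℝ) < q := by linarith
  have hq8 : (8:ℝ) ≤ (q:ℝ)^3 := by
    have := pow_le_pow_left₀ (by norm_num : (0:ℝ) ≤ 2) hq2 3
    norm_num at this; linarith
  have hlq : l2 ≤ Real.log q := Real.log_le_log two_pos hq2
  have hlq0 : 0 < Real.log q := lt_of_lt_of_le hl2 hlq
  set K : ℕ := ⌊Real.logb 2 ((q:ℝ)^3/δ)⌋₊ + 1 with hKdef
  have hmaps : ∀ x ∈ Finset.Icc q (q^3), kfun α x ∈ Finset.range K := by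
    intro x hx
    rw [Finset.mem_Icc] at hx
    have hx1 : 1 ≤ x := by omega
    have hrp : 0 < rr α x := rr_pos hδ0 hδ hx1
    have hδx := delta_le_mul_rr hδ0 hδ (α := α) hx1
    have hxle : (x:ℝ) ≤ (q:ℝ)^3 := by exact_mod_cast hx.2
    have h1 : 1/rr α x ≤ (q:ℝ)^3/δ := by
      rw [div_le_div_iff₀ hrp hδ0]
      calc 1*δ = δ := one_mul δ
        _ ≤ (x:ℝ) * rr α x := hδx
        _ ≤ (q:ℝ)^3 * rr α x := mul_le_mul_of_nonneg_right hxle hrp.le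
    have h2 : Real.logb 2 (1/rr α x) ≤ Real.logb 2 ((q:ℝ)^3/δ) :=
      Real.logb_le_logb_of_le one_lt_two (by positivity) h1
    have h3 : kfun α x ≤ ⌊Real.logb 2 ((q:ℝ)^3/δ)⌋₊ := Nat.floor_mono h2
    rw [Finset.mem_range, hKdef]
    omega
  rw [← Finset.sum_fiberwise_of_maps_to hmaps]
  have hfib : ∀ k ∈ Finset.range K,
      ∑ x ∈ (Finset.Icc q (q^3)).filter (fun x => kfun α x = k),
        1 / (nint (α * x) * x * (Real.log (1 / nint (α * x))) ^ a
              * (Real.log x) ^ (2 - a))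
      ≤ 2^(k+1) * (1 / (max (q:ℝ) (δ*2^k) * ((k:ℝ)^a * l2^a)
            * (Real.log (max (q:ℝ) (δ*2^k)))^(2-a)))
        + (4/δ) * (1 + Real.log (2*(q:ℝ)^3/δ)) / (l2^a * (Real.log q)^(2-a))
            * (k:ℝ)^(-a) := by
    intro k _
    exact fiber_sum_le hδ0 hδ ha ha1 hq
  have hBsum := Bsum_le hδ0 hδh ha ha1 hq K
  have hHsum : ∑ k ∈ Finset.range K,
      (4/δ) * (1 + Real.log (2*(q:ℝ)^3/δ)) / (l2^a * (Real.log q)^(2-a)) * (k:ℝ)^(-a)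
      ≤ CH := by
    set Λ : ℝ := 1 + Real.log (2*(q:ℝ)^3/δ) with hΛdef
    set cH : ℝ := (4/δ) * Λ / (l2^a * (Real.log q)^(2-a)) with hcHdef
    have hl2a : (0:ℝ) < l2^a := Real.rpow_pos_of_pos hl2 _
    have hlqa : (0:ℝ) < (Real.log q)^(2-a) := Real.rpow_pos_of_pos hlq0 _
    have hargΛ : (1:ℝ) ≤ 2*(q:ℝ)^3/δ := by
      rw [le_div_iff₀ hδ0]; nlinarith [hq8]
    have hΛ0 : 0 < Λ := by
      have := Real.log_nonneg hargΛ
      rw [hΛdef]; linarith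
    have hcH0 : 0 ≤ cH := by rw [hcHdef]; positivity
    have hpow0 : ∀ k : ℕ, (0:ℝ) ≤ (k:ℝ)^(-a) := fun k => Real.rpow_nonneg (Nat.cast_nonneg k) _
    have hsum1 : ∑ k ∈ Finset.range K, (k:ℝ)^(-a) ≤ (K:ℝ)^(1-a)/(1-a) := by
      calc ∑ k ∈ Finset.range K, (k:ℝ)^(-a) ≤ ∑ k ∈ Finset.Icc 1 K, (k:ℝ)^(-a) := by
            apply sum_range_le_sum_Icc _ (fun k => hpow0 k)
            rw [Nat.cast_zero, Real.zero_rpow (neg_ne_zero.mpr (ne_of_gt ha))]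
        _ ≤ (K:ℝ)^(1-a)/(1-a) := sum_rpow_neg ha ha1 K
    -- Λ ≤ c₅ log q
    have hlog2q : Real.log (2*(q:ℝ)^3/δ) = 3*Real.log q + Real.log (2/δ) := by
      rw [show 2*(q:ℝ)^3/δ = (q:ℝ)^3 * (2/δ) by ring,
        Real.log_mul (by positivity) (by positivity), Real.log_pow]
      push_cast; ring
    have hΛle : Λ ≤ c₅ * Real.log q := by
      have hd0 : 0 ≤ (1 + Real.log (2/δ))/l2 := div_nonneg (by linarith) hl2.le
      have h1 : (1 + Real.log (2/δ))/l2 * l2 ≤ (1 + Real.log (2/δ))/l2 * Real.log q :=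
        mul_le_mul_of_nonneg_left hlq hd0
      have h2 : (1 + Real.log (2/δ))/l2 * l2 = 1 + Real.log (2/δ) := by field_simp
      have h3 : c₅ * Real.log q
          = 3*Real.log q + (1 + Real.log (2/δ))/l2 * Real.log q := by rw [hc₅def]; ring
      rw [hΛdef, hlog2q]
      linarith
    -- K ≤ c₃ log q
    have hq3δ : (1:ℝ) ≤ (q:ℝ)^3/δ := by
      rw [le_div_iff₀ hδ0]; nlinarith [hq8]
    have hlbnn : 0 ≤ Real.logb 2 ((q:ℝ)^3/δ) := Real.logb_nonneg one_lt_two hq3δ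
    have hKle : (K:ℝ) ≤ c₃ * Real.log q := by
      have h1 : (K:ℝ) ≤ Real.logb 2 ((q:ℝ)^3/δ) + 1 := by
        rw [hKdef]
        push_cast
        have := Nat.floor_le hlbnn
        linarith
      have h2 : Real.logb 2 ((q:ℝ)^3/δ) = (3*Real.log q + Real.log (1/δ))/l2 := by
        rw [Real.logb, Real.log_div (by positivity) (ne_of_gt hδ0), Real.log_pow,
          one_div, Real.log_inv]
        push_cast; ring
      have hA : Real.log (1/δ)/l2 ≤ Real.log (1/δ)/l2^2 * Real.log q := by
        have e : Real.log (1/δ)/l2^2 * Real.log q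
            = (Real.log (1/δ)/l2) * (Real.log q/l2) := by ring
        have h4 : (1:ℝ) ≤ Real.log q/l2 := (one_le_div hl2).2 hlq
        have h5 := mul_le_mul_of_nonneg_left h4 (div_nonneg hlogδ0 hl2.le)
        rw [mul_one] at h5
        rw [e]
        exact h5
      have hB1 : (1:ℝ) ≤ 1/l2 * Real.log q := by
        have h4 : (1:ℝ) ≤ Real.log q/l2 := (one_le_div hl2).2 hlq
        have e : 1/l2 * Real.log q = Real.log q/l2 := by ring
        rw [e]; exact h4
      have h3 : c₃ * Real.log q
          = 3/l2*Real.log q + Real.log (1/δ)/l2^2*Real.log q + 1/l2*Real.log q := by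
        rw [hc₃def]; ring
      have h6 : (3*Real.log q + Real.log (1/δ))/l2
          = 3/l2*Real.log q + Real.log (1/δ)/l2 := by ring
      rw [h2, h6] at h1
      rw [h3]
      linarith
    have hK0 : (0:ℝ) ≤ (K:ℝ) := Nat.cast_nonneg K
    have hKpow : (K:ℝ)^(1-a) ≤ c₃^(1-a) * (Real.log q)^(1-a) := by
      calc (K:ℝ)^(1-a) ≤ (c₃ * Real.log q)^(1-a) :=
            Real.rpow_le_rpow hK0 hKle (by linarith)
        _ = c₃^(1-a) * (Real.log q)^(1-a) := Real.mul_rpow hc₃0.le hlq0.le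
    have hrpowlq : (0:ℝ) < (Real.log q)^(1-a) := Real.rpow_pos_of_pos hlq0 _
    have hsplitpow : (Real.log q)^(2-a) = Real.log q * (Real.log q)^(1-a) := by
      rw [show (2:ℝ)-a = 1 + (1-a) by ring, Real.rpow_add hlq0, Real.rpow_one]
    calc ∑ k ∈ Finset.range K, cH * (k:ℝ)^(-a)
        = cH * ∑ k ∈ Finset.range K, (k:ℝ)^(-a) := by rw [Finset.mul_sum]
      _ ≤ cH * ((K:ℝ)^(1-a)/(1-a)) := mul_le_mul_of_nonneg_left hsum1 hcH0
      _ ≤ ((4/δ) * (c₅ * Real.log q) / (l2^a * (Real.log q)^(2-a)))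
            * ((c₃^(1-a) * (Real.log q)^(1-a))/(1-a)) := by
          have h1a : (0:ℝ) < 1-a := by linarith
          have hd : (0:ℝ) < l2^a * (Real.log q)^(2-a) := mul_pos hl2a hlqa
          have hcH' : 0 ≤ (4/δ) * (c₅ * Real.log q) / (l2^a * (Real.log q)^(2-a)) := by
            apply div_nonneg _ hd.le
            exact mul_nonneg (div_nonneg (by norm_num) hδ0.le)
              (mul_nonneg hc₅0.le hlq0.le)
          apply mul_le_mul
          · rw [hcHdef]
            exact div_le_div_of_nonneg_right
              (mul_le_mul_of_nonneg_left hΛle (div_nonneg (by norm_num) hδ0.le)) hd.le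
          · exact div_le_div_of_nonneg_right hKpow h1a.le
          · exact div_nonneg (Real.rpow_nonneg hK0 _) h1a.le
          · exact hcH'
      _ = CH := by
          rw [hCHdef, hsplitpow]
          have ne2 : l2^a ≠ 0 := ne_of_gt hl2a
          have ne3 : Real.log q ≠ 0 := ne_of_gt hlq0
          have ne4 : (Real.log q)^(1-a) ≠ 0 := ne_of_gt hrpowlq
          have ne5 : (1:ℝ)-a ≠ 0 := by intro h; apply absurd ha1; linarith
          have ne1 : δ ≠ 0 := ne_of_gt hδ0
          field_simp
  calc ∑ k ∈ Finset.range K,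
        ∑ x ∈ (Finset.Icc q (q^3)).filter (fun x => kfun α x = k),
          1 / (nint (α * x) * x * (Real.log (1 / nint (α * x))) ^ a
              * (Real.log x) ^ (2 - a))
      ≤ ∑ k ∈ Finset.range K,
          (2^(k+1) * (1 / (max (q:ℝ) (δ*2^k) * ((k:ℝ)^a * l2^a)
            * (Real.log (max (q:ℝ) (δ*2^k)))^(2-a)))
          + (4/δ) * (1 + Real.log (2*(q:ℝ)^3/δ)) / (l2^a * (Real.log q)^(2-a))
            * (k:ℝ)^(-a)) := Finset.sum_le_sum hfib
    _ = ∑ k ∈ Finset.range K,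
          2^(k+1) * (1 / (max (q:ℝ) (δ*2^k) * ((k:ℝ)^a * l2^a)
            * (Real.log (max (q:ℝ) (δ*2^k)))^(2-a)))
        + ∑ k ∈ Finset.range K,
          (4/δ) * (1 + Real.log (2*(q:ℝ)^3/δ)) / (l2^a * (Real.log q)^(2-a))
            * (k:ℝ)^(-a) := Finset.sum_add_distrib
    _ ≤ CB + CH := add_le_add hBsum hHsum
end

section
/- Let p be a prime and let 0 ≤ a < 1. There exists a constant C(a,p) > 0 such that for every integer q ≥ 2, the sum over integers x with q ≤ x ≤ q³ of 1/(x · |x|_p · (log(2/|x|_p))^a · (log x)^{2−a}) is at most C(a,p). -/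
open Real Finset

noncomputable def pabs (p x : ℕ) : ℝ := (p : ℝ) ^ (-(padicValNat p x : ℤ))


lemma harm (N : ℕ) : ∑ m ∈ Finset.Icc 1 N, (1/(m:ℝ)) ≤ 1 + Real.log N := by
  induction N with
  | zero => simp
  | succ N ih =>
    rw [Finset.sum_Icc_succ_top (by omega)]
    rcases Nat.eq_zero_or_pos N with rfl | hN
    · norm_num
    · have h1 : (0:ℝ) < N := by exact_mod_cast hN
      have key : 1/((N:ℝ)+1) ≤ Real.log (N+1) - Real.log N := by
        have := Real.log_le_sub_one_of_pos (x := (N:ℝ)/(N+1)) (by positivity)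
        rw [Real.log_div (by positivity) (by positivity)] at this
        have : Real.log N - Real.log (N+1) ≤ -(1/((N:ℝ)+1)) := by
          rw [div_sub_one (by positivity)] at this
          calc Real.log N - Real.log (N+1) ≤ ((N:ℝ) - (N+1))/((N:ℝ)+1) := this
            _ = -(1/((N:ℝ)+1)) := by ring
        linarith
      push_cast
      push_cast at ih
      linarith

lemma powsum {a : ℝ} (ha : 0 ≤ a) (ha1 : a < 1) (V : ℕ) :
    ∑ v ∈ Finset.range V, ((v:ℝ)+1)^(-a) ≤ (V:ℝ)^(1-a)/(1-a) := by
  have h1a : (0:ℝ) < 1 - a := by linarith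
  induction V with
  | zero => simp [Real.zero_rpow (by linarith : (1:ℝ) - a ≠ 0)]
  | succ V ih =>
    rw [Finset.sum_range_succ]
    have key : (1-a) * ((V:ℝ)+1)^(-a) ≤ ((V:ℝ)+1)^(1-a) - (V:ℝ)^(1-a) := by
      have hx : (0:ℝ) ≤ (V:ℝ) := by positivity
      have hx1 : (0:ℝ) < (V:ℝ)+1 := by positivity
      have hs : (-1:ℝ) ≤ -(1/((V:ℝ)+1)) := by
        rw [neg_le_neg_iff]
        exact div_le_one_of_le₀ (by linarith) (by linarith)
      have bern := rpow_one_add_le_one_add_mul_self hs (p := 1-a) (by linarith) (by linarith)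
      have hfact : (V:ℝ) = ((V:ℝ)+1) * (1 + -(1/((V:ℝ)+1))) := by
        field_simp
        ring
      have : (V:ℝ)^(1-a) = ((V:ℝ)+1)^(1-a) * (1 + -(1/((V:ℝ)+1)))^(1-a) := by
        conv_lhs => rw [hfact]
        rw [Real.mul_rpow hx1.le (by linarith)]
      rw [this]
      have h2 : ((V:ℝ)+1)^(1-a) * (1 + -(1/((V:ℝ)+1)))^(1-a)
          ≤ ((V:ℝ)+1)^(1-a) * (1 + (1-a) * -(1/((V:ℝ)+1))) :=
        mul_le_mul_of_nonneg_left bern (by positivity)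
      have h3 : ((V:ℝ)+1)^(1-a) * (1 + (1-a) * -(1/((V:ℝ)+1)))
          = ((V:ℝ)+1)^(1-a) - (1-a) * (((V:ℝ)+1)^(1-a) * ((V:ℝ)+1)^(-1:ℝ)) := by
        rw [Real.rpow_neg_one]
        field_simp
        ring
      have h4 : ((V:ℝ)+1)^(1-a) * ((V:ℝ)+1)^(-1:ℝ) = ((V:ℝ)+1)^(-a) := by
        rw [← Real.rpow_add hx1]; ring_nf
      rw [h3, h4] at h2
      linarith
    have : ((V:ℝ)+1)^(-a) ≤ (((V:ℝ)+1)^(1-a) - (V:ℝ)^(1-a))/(1-a) := by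
      rw [le_div_iff₀ h1a]; linarith [key]
    push_cast
    calc ∑ v ∈ Finset.range V, ((v:ℝ)+1)^(-a) + ((V:ℝ)+1)^(-a)
        ≤ (V:ℝ)^(1-a)/(1-a) + (((V:ℝ)+1)^(1-a) - (V:ℝ)^(1-a))/(1-a) := by
          exact add_le_add ih this
      _ = ((V:ℝ)+1)^(1-a)/(1-a) := by ring

theorem stmt_3 (p : ℕ) (hp : p.Prime) (a : ℝ) (ha : 0 ≤ a) (ha1 : a < 1) :
    ∃ C > 0, ∀ q : ℕ, 2 ≤ q →
      ∑ x ∈ Finset.Icc q (q ^ 3),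
        1 / (x * pabs p x * (Real.log (2 / pabs p x)) ^ a
              * (Real.log x) ^ (2 - a)) ≤ C := by
  have hL2 : 0 < Real.log 2 := Real.log_pos one_lt_two
  set L2 := Real.log 2 with hL2def
  have h1a : (0:ℝ) < 1 - a := by linarith
  refine ⟨(3 + 1/L2) * (4/L2)^(1-a) / ((1-a) * L2^a), ?_, ?_⟩
  · apply div_pos
    · exact mul_pos (by positivity) (Real.rpow_pos_of_pos (by positivity) _)
    · exact mul_pos h1a (Real.rpow_pos_of_pos hL2 _)
  intro q hq
  have hq0 : 0 < q := by omega
  have hq3 : q ^ 3 ≠ 0 := by positivity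
  have hqR : (2:ℝ) ≤ (q:ℝ) := by exact_mod_cast hq
  have hlq : L2 ≤ Real.log q := Real.log_le_log two_pos hqR
  have hlq0 : 0 < Real.log q := lt_of_lt_of_le hL2 hlq
  have hpR : (0:ℝ) < (p:ℝ) := by exact_mod_cast hp.pos
  set lq := Real.log q with hlqdef
  set V1 : ℕ := Nat.log 2 (q ^ 3) + 1 with hV1
  set S := Finset.Icc q (q ^ 3) with hS
  set g : ℕ → ℕ × ℕ := fun x => (padicValNat p x, x / p ^ padicValNat p x) with hg
  set F : ℕ × ℕ → ℝ := fun y => ((y.1:ℝ)+1)^(-a) * (1/(y.2:ℝ)) with hF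
  set c : ℝ := 1/(L2^a * lq^(2-a)) with hc
  have hc0 : 0 ≤ c := by
    apply le_of_lt; apply div_pos one_pos
    exact mul_pos (Real.rpow_pos_of_pos hL2 _) (Real.rpow_pos_of_pos hlq0 _)
  have hF0 : ∀ y : ℕ × ℕ, 0 ≤ F y := by
    intro y
    apply mul_nonneg (Real.rpow_nonneg (by positivity) _) (by positivity)
  -- termwise bound
  have step1 : ∀ x ∈ S, 1 / (x * pabs p x * (Real.log (2 / pabs p x)) ^ a
              * (Real.log x) ^ (2 - a)) ≤ F (g x) * c := by
    intro x hx
    rw [Finset.mem_Icc] at hx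
    have hx2 : 2 ≤ x := le_trans hq hx.1
    have hx0 : x ≠ 0 := by omega
    set v := padicValNat p x with hv
    set m := x / p ^ v with hm
    have hdvd : p ^ v ∣ x := pow_padicValNat_dvd
    have hxm : p ^ v * m = x := Nat.mul_div_cancel' hdvd
    have hm1 : 1 ≤ m := (Nat.one_le_div_iff (pow_pos hp.pos v)).mpr (Nat.le_of_dvd (by omega) hdvd)
    have hmR : (1:ℝ) ≤ (m:ℝ) := by exact_mod_cast hm1
    have hpv0 : (0:ℝ) < (p:ℝ) ^ v := by positivity
    have hpabs : pabs p x = ((p:ℝ) ^ v)⁻¹ := by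
      rw [pabs, ← hv, zpow_neg, zpow_natCast]
    have hxpabs : (x:ℝ) * pabs p x = (m:ℝ) := by
      have : (x:ℝ) = (p:ℝ)^v * (m:ℝ) := by exact_mod_cast hxm.symm
      rw [hpabs, this]
      field_simp
    have h2pabs : 2 / pabs p x = 2 * (p:ℝ)^v := by
      rw [hpabs]; field_simp
    have hlog1 : ((v:ℝ)+1) * L2 ≤ Real.log (2 / pabs p x) := by
      rw [h2pabs]
      have h2v : (2:ℝ)^(v+1) ≤ 2 * (p:ℝ)^v := by
        rw [pow_succ, mul_comm]
        have : (2:ℝ)^v ≤ (p:ℝ)^v := by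
          apply pow_le_pow_left₀ (by norm_num)
          exact_mod_cast hp.two_le
        linarith
      calc ((v:ℝ)+1) * L2 = Real.log ((2:ℝ)^(v+1)) := by
            rw [Real.log_pow]; push_cast; ring
        _ ≤ Real.log (2 * (p:ℝ)^v) := Real.log_le_log (by positivity) h2v
    have hlogx : lq ≤ Real.log x := by
      apply Real.log_le_log (by positivity)
      exact_mod_cast hx.1
    -- denominator bounds
    have hA : ((v:ℝ)+1)^a * L2^a ≤ (Real.log (2 / pabs p x)) ^ a := by
      rw [← Real.mul_rpow (by positivity) hL2.le]
      exact Real.rpow_le_rpow (by positivity) hlog1 ha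
    have hB : lq^(2-a) ≤ (Real.log x) ^ (2-a) := by
      exact Real.rpow_le_rpow hlq0.le hlogx (by linarith)
    have hD' : (0:ℝ) < (m:ℝ) * (((v:ℝ)+1)^a * L2^a) * lq^(2-a) := by
      apply mul_pos (mul_pos (by linarith) _) (Real.rpow_pos_of_pos hlq0 _)
      exact mul_pos (Real.rpow_pos_of_pos (by positivity) _) (Real.rpow_pos_of_pos hL2 _)
    have hDle : (m:ℝ) * (((v:ℝ)+1)^a * L2^a) * lq^(2-a)
        ≤ (x:ℝ) * pabs p x * (Real.log (2 / pabs p x)) ^ a * (Real.log x) ^ (2-a) := by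
      rw [hxpabs]
      refine mul_le_mul (mul_le_mul_of_nonneg_left hA (by linarith)) hB
        (Real.rpow_nonneg hlq0.le _)
        (mul_nonneg (by linarith) (le_trans (by positivity) hA))
    have := one_div_le_one_div_of_le hD' hDle
    refine le_trans this (le_of_eq ?_)
    rw [hF, hc]
    simp only
    rw [Real.rpow_neg (by positivity)]
    rw [one_div, one_div, one_div, mul_inv, mul_inv, mul_inv]
    ring
  -- sum manipulations
  have hginj : ∀ x ∈ S, ∀ y ∈ S, g x = g y → x = y := by
    intro x hx y hy hxy
    rw [Finset.mem_Icc] at hx hy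
    have ex : p ^ (padicValNat p x) * (x / p ^ padicValNat p x) = x :=
      Nat.mul_div_cancel' pow_padicValNat_dvd
    have ey : p ^ (padicValNat p y) * (y / p ^ padicValNat p y) = y :=
      Nat.mul_div_cancel' pow_padicValNat_dvd
    have h1 : padicValNat p x = padicValNat p y := by have := congrArg Prod.fst hxy; exact this
    have h2 : x / p ^ padicValNat p x = y / p ^ padicValNat p y := congrArg Prod.snd hxy
    rw [← ex, ← ey, h2, h1]
  have himg : S.image g ⊆ Finset.range V1 ×ˢ Finset.Icc 1 (q ^ 3) := by
    intro y hy
    rw [Finset.mem_image] at hy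
    obtain ⟨x, hx, rfl⟩ := hy
    rw [Finset.mem_Icc] at hx
    have hx0 : 0 < x := by omega
    have hdvd : p ^ (padicValNat p x) ∣ x := pow_padicValNat_dvd
    have hpvx : p ^ (padicValNat p x) ≤ x := Nat.le_of_dvd hx0 hdvd
    simp only [hg, Finset.mem_product, Finset.mem_range, Finset.mem_Icc]
    refine ⟨?_, ?_, ?_⟩
    · have h2v : 2 ^ (padicValNat p x) ≤ q ^ 3 :=
        le_trans (le_trans (Nat.pow_le_pow_left hp.two_le _) hpvx) hx.2
      have := (Nat.le_log_iff_pow_le one_lt_two hq3).mpr h2v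
      omega
    · exact (Nat.one_le_div_iff (pow_pos hp.pos _)).mpr hpvx
    · exact le_trans (Nat.div_le_self _ _) hx.2
  calc ∑ x ∈ S, 1 / (x * pabs p x * (Real.log (2 / pabs p x)) ^ a
              * (Real.log x) ^ (2 - a))
      ≤ ∑ x ∈ S, F (g x) * c := Finset.sum_le_sum step1
    _ = (∑ x ∈ S, F (g x)) * c := (Finset.sum_mul _ _ _).symm
    _ = (∑ y ∈ S.image g, F y) * c := by rw [Finset.sum_image hginj]
    _ ≤ (∑ y ∈ Finset.range V1 ×ˢ Finset.Icc 1 (q ^ 3), F y) * c := by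
        apply mul_le_mul_of_nonneg_right _ hc0
        apply Finset.sum_le_sum_of_subset_of_nonneg himg
        intro y _ _; exact hF0 y
    _ = (∑ v ∈ Finset.range V1, ((v:ℝ)+1)^(-a)) * (∑ m ∈ Finset.Icc 1 (q^3), (1/(m:ℝ))) * c := by
        rw [Finset.sum_product]
        simp only [hF]
        rw [Finset.sum_mul_sum]
    _ ≤ ((4 * lq / L2)^(1-a)/(1-a)) * ((3 + 1/L2) * lq) * c := by
        apply mul_le_mul_of_nonneg_right _ hc0
        apply mul_le_mul
        · refine le_trans (powsum ha ha1 V1) ?_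
          have hpl : (2:ℕ) ^ Nat.log 2 (q^3) ≤ q^3 := Nat.pow_log_le_self 2 hq3
          have hplR : ((2:ℝ)) ^ Nat.log 2 (q^3) ≤ ((q:ℝ))^3 := by exact_mod_cast hpl
          have hlogle : (Nat.log 2 (q^3) : ℝ) * L2 ≤ 3 * lq := by
            have h := Real.log_le_log (by positivity) hplR
            rw [Real.log_pow, Real.log_pow] at h
            exact_mod_cast h
          have hV1R : (V1:ℝ) ≤ 4 * lq / L2 := by
            rw [le_div_iff₀ hL2, hV1]
            push_cast
            nlinarith [hlq, hL2]
          exact (div_le_div_iff_of_pos_right h1a).mpr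
            (Real.rpow_le_rpow (by positivity) hV1R (by linarith))
        · refine le_trans (harm (q^3)) ?_
          have hlog3 : Real.log ((q:ℝ)^3) = 3 * lq := by
            rw [Real.log_pow]; push_cast; ring
          have : Real.log ((q^3 : ℕ):ℝ) = 3 * lq := by push_cast; rw [Real.log_pow]; push_cast; ring
          rw [this]
          have h1 : 1 ≤ lq / L2 := (one_le_div hL2).mpr hlq
          have : (1:ℝ) ≤ (1/L2) * lq := by
            rw [one_div, inv_mul_eq_div]; exact h1
          nlinarith [hlq0]
        · positivity
        · positivity
    _ = (3 + 1/L2) * (4/L2)^(1-a) / ((1-a) * L2^a) := by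
        rw [hc]
        have e1 : 4 * lq / L2 = (4/L2) * lq := by ring
        rw [e1, Real.mul_rpow (by positivity) hlq0.le]
        have e2 : lq^(1-a) * lq = lq^(2-a) := by
          have : (2:ℝ)-a = (1-a)+1 := by ring
          rw [this, Real.rpow_add hlq0, Real.rpow_one]
        have hne : lq^(2-a) ≠ 0 := ne_of_gt (Real.rpow_pos_of_pos hlq0 _)
        have hne2 : L2^a ≠ 0 := ne_of_gt (Real.rpow_pos_of_pos hL2 _)
        calc (4 / L2) ^ (1 - a) * lq ^ (1 - a) / (1 - a) * ((3 + 1 / L2) * lq) *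
              (1 / (L2 ^ a * lq ^ (2 - a)))
            = (3 + 1/L2) * (4/L2)^(1-a) * ((1-a)⁻¹ * (L2^a)⁻¹) * ((lq^(1-a) * lq) / lq^(2-a)) := by
              ring
          _ = (3 + 1/L2) * (4/L2)^(1-a) * ((1-a)⁻¹ * (L2^a)⁻¹) := by
              rw [e2, div_self hne, mul_one]
          _ = (3 + 1/L2) * (4/L2)^(1-a) / ((1-a) * L2^a) := by
              rw [← div_div]; ring
end

section
/- Let p be a prime and q ≥ 2 an integer. Then the sum over j from 0 to ⌊3 log q⌋ of (1/(j+1)^a) times the sum of 1/x over integers x not divisible by p with q/p^j ≤ x ≤ q³/p^j is O((log q)^{2−a}), where 0 ≤ a < 1 and the implied constant depends only on a and p. -/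
open Finset Real

lemma outer_bound (a : ℝ) (ha : 0 ≤ a) (ha1 : a < 1) (n : ℕ) :
    ∑ j ∈ Finset.range n, (1 : ℝ) / ((j : ℝ) + 1) ^ a ≤ (n : ℝ) ^ (1 - a) / (1 - a) := by
  have h1a : 0 < 1 - a := by linarith
  induction n with
  | zero => simp [Real.zero_rpow h1a.ne']
  | succ n ih =>
    rw [Finset.sum_range_succ]
    have hn1 : (0:ℝ) < (n:ℝ) + 1 := by positivity
    have hpow : (0:ℝ) < ((n : ℝ) + 1) ^ a := Real.rpow_pos_of_pos hn1 a
    have hgm : (n : ℝ) ^ (1 - a) * ((n : ℝ) + 1) ^ a ≤ (n : ℝ) + a := by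
      have := Real.geom_mean_le_arith_mean2_weighted (le_of_lt h1a) ha
        (Nat.cast_nonneg n) (le_of_lt hn1) (by ring)
      calc (n : ℝ) ^ (1 - a) * ((n : ℝ) + 1) ^ a ≤ (1 - a) * n + a * ((n:ℝ) + 1) := this
        _ = (n : ℝ) + a := by ring
    have hkey : (n : ℝ) ^ (1 - a) + (1 - a) / ((n : ℝ) + 1) ^ a ≤ ((n : ℝ) + 1) ^ (1 - a) := by
      have h2 : (n:ℝ)^(1-a) ≤ ((n:ℝ)+a)/((n:ℝ)+1)^a := (le_div_iff₀ hpow).mpr hgm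
      have e1 : ((n:ℝ)+1)^(1-a) = ((n:ℝ)+1)/((n:ℝ)+1)^a := by
        rw [Real.rpow_sub hn1]; simp
      have e2 : ((n:ℝ)+a)/((n:ℝ)+1)^a + (1-a)/((n:ℝ)+1)^a = ((n:ℝ)+1)/((n:ℝ)+1)^a := by
        rw [← add_div]; ring_nf
      rw [e1]
      linarith
    have h := (div_le_div_iff_of_pos_right h1a).mpr hkey
    rw [add_div] at h
    have e3 : (1 - a) / (((n:ℝ)+1)^a) / (1-a) = 1/((n:ℝ)+1)^a := by
      field_simp
    rw [e3] at h
    push_cast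
    linarith

lemma inner_bound (n : ℕ) (s : Finset ℕ) (hs : s ⊆ Finset.Icc 1 n) :
    ∑ x ∈ s, (1 : ℝ) / x ≤ 1 + Real.log n := by
  calc ∑ x ∈ s, (1 : ℝ) / x ≤ ∑ x ∈ Finset.Icc 1 n, (1 : ℝ) / x :=
        Finset.sum_le_sum_of_subset_of_nonneg hs (by intros; positivity)
    _ = (harmonic n : ℝ) := by
        rw [harmonic_eq_sum_Icc]; push_cast; simp [one_div]
    _ ≤ 1 + Real.log n := harmonic_le_one_add_log n

theorem stmt_5 (p : ℕ) (hp : p.Prime) (a : ℝ) (ha : 0 ≤ a) (ha1 : a < 1) :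
    ∃ C > 0, ∀ q : ℕ, 2 ≤ q →
      ∑ j ∈ Finset.range (⌊3 * Real.log q⌋₊ + 1),
        (1 / ((j : ℝ) + 1) ^ a) *
          ∑ x ∈ (Finset.Icc ⌈(q : ℝ) / p ^ j⌉₊ ⌊(q : ℝ) ^ 3 / p ^ j⌋₊).filter
              (fun x => ¬ p ∣ x),
            (1 : ℝ) / x
        ≤ C * (Real.log q) ^ (2 - a) := by
  have h1a : 0 < 1 - a := by linarith
  refine ⟨25 / (1 - a), by positivity, fun q hq => ?_⟩
  have hq1 : (1:ℝ) < q := by exact_mod_cast Nat.lt_of_lt_of_le one_lt_two hq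
  have hq0 : (0:ℝ) < q := by linarith
  have hL : (0:ℝ) < Real.log q := Real.log_pos hq1
  have hL2 : Real.log 2 ≤ Real.log q := Real.log_le_log (by norm_num) (by exact_mod_cast hq)
  have h12 : 1 ≤ 2 * Real.log q := by
    have := Real.log_two_gt_d9
    nlinarith
  set L := Real.log q with hLdef
  have hpj : ∀ j : ℕ, (0:ℝ) < (p:ℝ) ^ j := fun j => by
    have := hp.pos; positivity
  -- inner sum bound
  have hinner : ∀ j : ℕ,
      ∑ x ∈ (Finset.Icc ⌈(q : ℝ) / p ^ j⌉₊ ⌊(q : ℝ) ^ 3 / p ^ j⌋₊).filter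
          (fun x => ¬ p ∣ x), (1 : ℝ) / x ≤ 5 * L := by
    intro j
    set n := ⌊(q : ℝ) ^ 3 / p ^ j⌋₊ with hn
    have hsub : (Finset.Icc ⌈(q : ℝ) / p ^ j⌉₊ n).filter (fun x => ¬ p ∣ x) ⊆
        Finset.Icc 1 n := by
      intro x hx
      simp only [Finset.mem_filter, Finset.mem_Icc] at hx ⊢
      refine ⟨le_trans ?_ hx.1.1, hx.1.2⟩
      exact Nat.one_le_ceil_iff.mpr (div_pos hq0 (hpj j))
    have h1 := inner_bound n _ hsub
    have hlog : Real.log n ≤ 3 * L := by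
      rcases Nat.eq_zero_or_pos n with h0 | h0
      · rw [h0]; simp; positivity
      · have hn3 : (n:ℝ) ≤ (q:ℝ)^3 := by
          refine le_trans (Nat.floor_le (by positivity)) ?_
          rw [div_le_iff₀ (hpj j)]
          have hone : (1:ℝ) ≤ (p:ℝ)^j :=
            one_le_pow₀ (by exact_mod_cast hp.one_lt.le)
          nlinarith [hpj j, hone, pow_pos hq0 3]
        calc Real.log n ≤ Real.log ((q:ℝ)^3) :=
              Real.log_le_log (by exact_mod_cast h0) hn3
          _ = 3 * L := by rw [Real.log_pow]; push_cast; ring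
    linarith
  -- combine
  have hcj : ∀ j : ℕ, 0 ≤ (1:ℝ) / ((j:ℝ) + 1) ^ a := fun j => by positivity
  calc ∑ j ∈ Finset.range (⌊3 * L⌋₊ + 1),
        (1 / ((j : ℝ) + 1) ^ a) *
          ∑ x ∈ (Finset.Icc ⌈(q : ℝ) / p ^ j⌉₊ ⌊(q : ℝ) ^ 3 / p ^ j⌋₊).filter
              (fun x => ¬ p ∣ x), (1 : ℝ) / x
      ≤ ∑ j ∈ Finset.range (⌊3 * L⌋₊ + 1), (1 / ((j : ℝ) + 1) ^ a) * (5 * L) :=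
        Finset.sum_le_sum fun j _ => mul_le_mul_of_nonneg_left (hinner j) (hcj j)
    _ = (∑ j ∈ Finset.range (⌊3 * L⌋₊ + 1), (1:ℝ) / ((j : ℝ) + 1) ^ a) * (5 * L) := by
        rw [Finset.sum_mul]
    _ ≤ ((⌊3 * L⌋₊ + 1 : ℕ) : ℝ) ^ (1 - a) / (1 - a) * (5 * L) := by
        apply mul_le_mul_of_nonneg_right (outer_bound a ha ha1 _) (by positivity)
    _ ≤ 25 / (1 - a) * L ^ (2 - a) := by
        have hfl : ((⌊3 * L⌋₊ + 1 : ℕ) : ℝ) ≤ 5 * L := by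
          push_cast
          have := Nat.floor_le (show (0:ℝ) ≤ 3 * L by positivity)
          linarith
        have h5L : ((⌊3 * L⌋₊ + 1 : ℕ) : ℝ) ^ (1 - a) ≤ (5 * L) ^ (1 - a) :=
          Real.rpow_le_rpow (by positivity) hfl h1a.le
        have hsplit : (5 * L) ^ (1 - a) ≤ 5 * L ^ (1 - a) := by
          rw [Real.mul_rpow (by norm_num) hL.le]
          apply mul_le_mul_of_nonneg_right ?_ (Real.rpow_nonneg hL.le _)
          calc (5:ℝ) ^ (1 - a) ≤ (5:ℝ) ^ (1:ℝ) :=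
                Real.rpow_le_rpow_of_exponent_le (by norm_num) (by linarith)
            _ = 5 := Real.rpow_one 5
        have hLsplit : L ^ (2 - a) = L * L ^ (1 - a) := by
          rw [show (2:ℝ) - a = 1 + (1 - a) by ring, Real.rpow_add hL, Real.rpow_one]
        rw [hLsplit]
        have hA : ((⌊3 * L⌋₊ + 1 : ℕ) : ℝ) ^ (1 - a) ≤ 5 * L ^ (1 - a) := h5L.trans hsplit
        have hnn : (0:ℝ) ≤ L ^ (1 - a) := Real.rpow_nonneg hL.le _
        calc ((⌊3 * L⌋₊ + 1 : ℕ) : ℝ) ^ (1 - a) / (1 - a) * (5 * L)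
            ≤ (5 * L ^ (1 - a)) / (1 - a) * (5 * L) := by
              apply mul_le_mul_of_nonneg_right ?_ (by positivity)
              exact div_le_div_of_nonneg_right hA h1a.le
          _ = 25 / (1 - a) * (L * L ^ (1 - a)) := by field_simp; ring
end
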